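/- arXiv:2509.06850 — 3 statements merged into one kernel-verified Lean document; each statement's English description precedes it below -/
import Mathlib

section
/- (Cycle lemma for downward skip-free walks) For all k, ℓ ≥ 1, the weighted count of downward skip-free walks with ℓ steps from 0 to −k that remain strictly above −k before the last step equals (k/ℓ) times the weighted count of all downward skip-free walks with ℓ steps from 0 to −k. In generating function terms: [s^ℓ] U(s)^k = (k/ℓ)·[u^{−k}] P(u)^ℓ. -/
noncomputable section

/-- The coefficient ring: polynomials over `ℚ` in the formal variables
`p_{-1}, p_0, p_1, p_2, ...` (variable `p_j` is `X (j+1)`). -/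
abbrev Rp : Type := MvPolynomial ℕ ℚ

/-- The step weight `p_j` for a step of increment `j ≥ -1` (zero otherwise). -/
def pw (j : ℤ) : Rp := if -1 ≤ j then MvPolynomial.X (j + 1).toNat else 0

/-- The formal Laurent series `P(u) = p_{-1}u⁻¹ + p₀ + p₁u + p₂u² + ⋯`. -/
def Pser : LaurentSeries Rp :=
  HahnSeries.single (-1 : ℤ) (pw (-1)) +
    HahnSeries.ofPowerSeries ℤ Rp (PowerSeries.mk fun n => pw (n : ℤ))

/-- A sequence of positions `π₀, ..., π_ℓ` is a downward skip-free walk if every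
increment is at least `-1`. -/
def IsDSF {ℓ : ℕ} (π : Fin (ℓ + 1) → ℤ) : Prop :=
  ∀ i : Fin ℓ, -1 ≤ π i.succ - π i.castSucc

/-- The weight of a walk: the product over its steps of `p_{increment}`. -/
def walkWeight {ℓ : ℕ} (π : Fin (ℓ + 1) → ℤ) : Rp :=
  ∏ i : Fin ℓ, pw (π i.succ - π i.castSucc)

/-- The total weight of excursions with `ℓ` steps. -/
def excCoeff (ℓ : ℕ) : Rp :=
  ∑ᶠ (π : Fin (ℓ + 1) → ℤ)
    (_ : IsDSF π ∧ π 0 = 0 ∧ π (Fin.last ℓ) = -1 ∧ ∀ i : Fin ℓ, 0 ≤ π i.castSucc),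
    walkWeight π

/-- The generating function `U(s)` of excursions. -/
def Uexc : PowerSeries Rp := PowerSeries.mk excCoeff

namespace CycleAux
open Finset

/-- extension of a step sequence to ℕ -/
def ext {ℓ : ℕ} (σ : Fin ℓ → ℤ) (i : ℕ) : ℤ := if h : i < ℓ then σ ⟨i, h⟩ else 0

/-- partial sums -/
def psum {ℓ : ℕ} (σ : Fin ℓ → ℤ) (m : ℕ) : ℤ := ∑ i ∈ Finset.range m, ext σ i

def Wt {ℓ : ℕ} (σ : Fin ℓ → ℤ) : Rp := ∏ i, pw (σ i)

def Dset (ℓ : ℕ) (c : ℤ) : Finset (Fin ℓ → ℤ) :=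
  (Fintype.piFinset fun _ => Finset.Icc (-1 : ℤ) (c + ℓ)).filter fun σ => ∑ i, σ i = c

def Gset (ℓ k : ℕ) : Finset (Fin ℓ → ℤ) :=
  (Dset ℓ (-(k : ℤ))).filter fun σ => ∀ m < ℓ, -(k : ℤ) < psum σ m

def Dsum (ℓ : ℕ) (c : ℤ) : Rp := ∑ σ ∈ Dset ℓ c, Wt σ
def Gsum (ℓ k : ℕ) : Rp := ∑ σ ∈ Gset ℓ k, Wt σ

variable {ℓ a b : ℕ}

@[simp] lemma psum_zero (σ : Fin ℓ → ℤ) : psum σ 0 = 0 := by simp [psum]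

lemma psum_succ (σ : Fin ℓ → ℤ) (m : ℕ) : psum σ (m + 1) = psum σ m + ext σ m :=
  Finset.sum_range_succ _ _

lemma ext_of_lt (σ : Fin ℓ → ℤ) {i : ℕ} (h : i < ℓ) : ext σ i = σ ⟨i, h⟩ := dif_pos h

lemma ext_of_ge (σ : Fin ℓ → ℤ) {i : ℕ} (h : ℓ ≤ i) : ext σ i = 0 := dif_neg (by omega)

lemma psum_top (σ : Fin ℓ → ℤ) : psum σ ℓ = ∑ i, σ i := by
  rw [psum, ← Fin.sum_univ_eq_sum_range]
  exact Finset.sum_congr rfl fun i _ => ext_of_lt σ i.isLt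

lemma ext_ge_neg_one {σ : Fin ℓ → ℤ} (hσ : ∀ i, -1 ≤ σ i) (i : ℕ) : -1 ≤ ext σ i := by
  unfold ext; split
  · exact hσ _
  · norm_num

lemma mem_Dset {σ : Fin ℓ → ℤ} {c : ℤ} :
    σ ∈ Dset ℓ c ↔ (∀ i, -1 ≤ σ i) ∧ ∑ i, σ i = c := by
  constructor
  · intro h
    rw [Dset, Finset.mem_filter, Fintype.mem_piFinset] at h
    exact ⟨fun i => (Finset.mem_Icc.1 (h.1 i)).1, h.2⟩
  · rintro ⟨h1, h2⟩
    rw [Dset, Finset.mem_filter, Fintype.mem_piFinset]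
    refine ⟨fun i => Finset.mem_Icc.2 ⟨h1 i, ?_⟩, h2⟩
    have hins : σ i + ∑ j ∈ Finset.univ.erase i, σ j = c := by
      rw [Finset.add_sum_erase _ _ (Finset.mem_univ i), h2]
    have hcard : (Finset.univ.erase i).card = ℓ - 1 := by
      rw [Finset.card_erase_of_mem (Finset.mem_univ i)]
      simp
    have hlb : ∑ j ∈ Finset.univ.erase i, (-1 : ℤ) ≤ ∑ j ∈ Finset.univ.erase i, σ j :=
      Finset.sum_le_sum fun j _ => h1 j
    rw [Finset.sum_const, hcard, nsmul_eq_mul] at hlb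
    have hℓ1 : 0 < ℓ := i.pos
    have hc : ((ℓ - 1 : ℕ) : ℤ) = (ℓ : ℤ) - 1 := by omega
    rw [hc] at hlb
    omega

lemma mem_Gset {σ : Fin ℓ → ℤ} {k : ℕ} :
    σ ∈ Gset ℓ k ↔ (∀ i, -1 ≤ σ i) ∧ ∑ i, σ i = -(k : ℤ) ∧ ∀ m < ℓ, -(k : ℤ) < psum σ m := by
  rw [Gset, Finset.mem_filter, mem_Dset, and_assoc]


/-! ### Concatenation -/

def app (σ : Fin a → ℤ) (τ : Fin b → ℤ) (h : a + b = ℓ) : Fin ℓ → ℤ :=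
  fun i => if hi : (i : ℕ) < a then σ ⟨i, hi⟩ else τ ⟨(i : ℕ) - a, by omega⟩

lemma ext_app (σ : Fin a → ℤ) (τ : Fin b → ℤ) (h : a + b = ℓ) (i : ℕ) :
    ext (app σ τ h) i = if i < a then ext σ i else ext τ (i - a) := by
  rcases lt_or_ge i ℓ with hi | hi
  · rcases lt_or_ge i a with ha | ha
    · rw [ext_of_lt _ hi, if_pos ha, ext_of_lt _ ha]
      exact dif_pos ha
    · rw [ext_of_lt _ hi, if_neg (by omega), ext_of_lt _ (by omega : i - a < b)]
      exact dif_neg (not_lt.2 ha)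
  · rw [ext_of_ge _ hi, if_neg (by omega), ext_of_ge _ (by omega)]

lemma psum_app (σ : Fin a → ℤ) (τ : Fin b → ℤ) (h : a + b = ℓ) (m : ℕ) :
    psum (app σ τ h) m = if m ≤ a then psum σ m else psum σ a + psum τ (m - a) := by
  induction m with
  | zero => simp
  | succ m ih =>
    rw [psum_succ, ih, ext_app]
    rcases lt_or_ge m a with hm | hm
    · rw [if_pos hm, if_pos (Nat.le_of_lt hm), if_pos (by omega : m + 1 ≤ a), psum_succ]
    · rw [if_neg (by omega : ¬ m < a)]
      rcases Nat.eq_or_lt_of_le hm with he | hlt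
      · subst he
        rw [if_pos le_rfl, if_neg (by omega : ¬ a + 1 ≤ a)]
        have h1 : a - a = 0 := by omega
        have h2 : a + 1 - a = 0 + 1 := by omega
        rw [h1, h2, psum_succ, psum_zero]
        ring
      · rw [if_neg (by omega : ¬ m ≤ a), if_neg (by omega : ¬ m + 1 ≤ a)]
        have h2 : m + 1 - a = (m - a) + 1 := by omega
        rw [h2, psum_succ]
        ring

lemma Wt_eq_prod_range (σ : Fin ℓ → ℤ) : Wt σ = ∏ i ∈ Finset.range ℓ, pw (ext σ i) := by
  rw [Wt, ← Fin.prod_univ_eq_prod_range]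
  exact Finset.prod_congr rfl fun i _ => by rw [ext_of_lt σ i.isLt]

lemma Wt_app (σ : Fin a → ℤ) (τ : Fin b → ℤ) (h : a + b = ℓ) :
    Wt (app σ τ h) = Wt σ * Wt τ := by
  subst h
  rw [Wt_eq_prod_range, Finset.prod_range_add, Wt_eq_prod_range σ, Wt_eq_prod_range τ]
  congr 1
  · exact Finset.prod_congr rfl fun i hi => by
      rw [ext_app, if_pos (Finset.mem_range.1 hi)]
  · exact Finset.prod_congr rfl fun i _ => by
      rw [ext_app, if_neg (by omega), Nat.add_sub_cancel_left]

def takeF (h : a + b = ℓ) (ρ : Fin ℓ → ℤ) : Fin a → ℤ := fun i => ρ ⟨i, by omega⟩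
def dropF (h : a + b = ℓ) (ρ : Fin ℓ → ℤ) : Fin b → ℤ := fun i => ρ ⟨a + i, by omega⟩

lemma psum_take (h : a + b = ℓ) (ρ : Fin ℓ → ℤ) {m : ℕ} (hm : m ≤ a) :
    psum (takeF h ρ) m = psum ρ m :=
  Finset.sum_congr rfl fun i hi => by
    have hi' : i < a := lt_of_lt_of_le (Finset.mem_range.1 hi) hm
    rw [ext_of_lt _ hi', ext_of_lt _ (by omega : i < ℓ)]
    rfl

lemma psum_drop (h : a + b = ℓ) (ρ : Fin ℓ → ℤ) {t : ℕ} (ht : t ≤ b) :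
    psum (dropF h ρ) t = psum ρ (a + t) - psum ρ a := by
  induction t with
  | zero => simp
  | succ t ih =>
    rw [psum_succ, ih (by omega), ← Nat.add_assoc, psum_succ,
      ext_of_lt _ (by omega : t < b), ext_of_lt _ (by omega : a + t < ℓ)]
    show psum ρ (a + t) - psum ρ a + ρ _ = psum ρ (a + t) + ρ _ - psum ρ a
    ring

lemma app_take_drop (h : a + b = ℓ) (ρ : Fin ℓ → ℤ) :
    app (takeF h ρ) (dropF h ρ) h = ρ := by
  funext i
  rcases lt_or_ge (i : ℕ) a with hi | hi
  · exact dif_pos hi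
  · have e : app (takeF h ρ) (dropF h ρ) h i = dropF h ρ ⟨(i : ℕ) - a, by omega⟩ :=
      dif_neg (by omega)
    rw [e]
    exact congrArg ρ (Fin.ext (show a + ((i : ℕ) - a) = (i : ℕ) by omega))

lemma take_app (σ : Fin a → ℤ) (τ : Fin b → ℤ) (h : a + b = ℓ) :
    takeF h (app σ τ h) = σ := by
  funext i
  exact dif_pos i.isLt

lemma drop_app (σ : Fin a → ℤ) (τ : Fin b → ℤ) (h : a + b = ℓ) :
    dropF h (app σ τ h) = τ := by
  funext i
  have e : dropF h (app σ τ h) i = τ ⟨a + (i : ℕ) - a, by omega⟩ :=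
    dif_neg (by omega : ¬ a + (i : ℕ) < a)
  rw [e]
  exact congrArg τ (Fin.ext (show a + (i : ℕ) - a = (i : ℕ) by omega))


/-! ### From walks to step sequences -/

def toWalk {ℓ : ℕ} (σ : Fin ℓ → ℤ) : Fin (ℓ + 1) → ℤ := fun j => psum σ (j : ℕ)

def stepOf {ℓ : ℕ} (π : Fin (ℓ + 1) → ℤ) : Fin ℓ → ℤ := fun i => π i.succ - π i.castSucc

lemma toWalk_step (σ : Fin ℓ → ℤ) (i : Fin ℓ) :
    toWalk σ i.succ - toWalk σ i.castSucc = σ i := by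
  show psum σ ((i : ℕ) + 1) - psum σ (i : ℕ) = σ i
  rw [psum_succ, ext_of_lt σ i.isLt]
  simp

lemma walkWeight_toWalk (σ : Fin ℓ → ℤ) : walkWeight (toWalk σ) = Wt σ :=
  Finset.prod_congr rfl fun i _ => by rw [toWalk_step]

lemma toWalk_injective : Function.Injective (toWalk (ℓ := ℓ)) := by
  intro σ τ h
  funext i
  have := congrFun h i.succ
  have h2 := congrFun h i.castSucc
  have e1 := toWalk_step σ i
  have e2 := toWalk_step τ i
  rw [← e1, ← e2, this, h2]

lemma psum_stepOf {π : Fin (ℓ + 1) → ℤ} (h0 : π 0 = 0) :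
    ∀ m (hm : m ≤ ℓ), psum (stepOf π) m = π ⟨m, by omega⟩ := by
  intro m
  induction m with
  | zero =>
    intro hm
    have e : π ⟨0, by omega⟩ = π 0 := congrArg π (Fin.ext (by simp))
    rw [psum_zero, e, h0]
  | succ m ih =>
    intro hm
    rw [psum_succ, ih (by omega), ext_of_lt _ (by omega : m < ℓ)]
    show π _ + (π (Fin.succ ⟨m, by omega⟩) - π (Fin.castSucc ⟨m, by omega⟩)) = π _
    rw [Fin.succ_mk, Fin.castSucc_mk]
    ring_nf

lemma toWalk_stepOf {π : Fin (ℓ + 1) → ℤ} (h0 : π 0 = 0) : toWalk (stepOf π) = π := by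
  funext j
  rw [toWalk, psum_stepOf h0 (j : ℕ) (by omega)]
  all_goals exact congrArg π (Fin.ext (by simp))

lemma sum_stepOf {π : Fin (ℓ + 1) → ℤ} (h0 : π 0 = 0) :
    ∑ i, stepOf π i = π (Fin.last ℓ) := by
  rw [← psum_top, psum_stepOf h0 ℓ le_rfl]
  all_goals exact congrArg π (Fin.ext (by simp))

lemma setG_eq (ℓ k : ℕ) :
    {π : Fin (ℓ + 1) → ℤ | IsDSF π ∧ π 0 = 0 ∧ π (Fin.last ℓ) = -(k : ℤ) ∧
      ∀ i : Fin ℓ, -(k : ℤ) < π i.castSucc} = ↑((Gset ℓ k).image toWalk) := by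
  ext π
  simp only [Set.mem_setOf_eq, Finset.coe_image, Set.mem_image, Finset.mem_coe]
  constructor
  · rintro ⟨hdsf, h0, hlast, hmid⟩
    refine ⟨stepOf π, ?_, toWalk_stepOf h0⟩
    rw [mem_Gset]
    refine ⟨fun i => hdsf i, by rw [sum_stepOf h0, hlast], fun m hm => ?_⟩
    rw [psum_stepOf h0 m (by omega)]
    have := hmid ⟨m, hm⟩
    rwa [show (Fin.castSucc ⟨m, hm⟩) = (⟨m, by omega⟩ : Fin (ℓ + 1)) from Fin.ext rfl] at this
  · rintro ⟨σ, hσ, rfl⟩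
    rw [mem_Gset] at hσ
    obtain ⟨h1, h2, h3⟩ := hσ
    refine ⟨fun i => ?_, ?_, ?_, fun i => ?_⟩
    · rw [toWalk_step]; exact h1 i
    · show psum σ ((0 : Fin (ℓ + 1)) : ℕ) = 0
      rw [Fin.val_zero, psum_zero]
    · show psum σ ((Fin.last ℓ : Fin (ℓ + 1)) : ℕ) = -(k : ℤ)
      rw [Fin.val_last, psum_top, h2]
    · show -(k : ℤ) < psum σ ((i.castSucc : Fin (ℓ + 1)) : ℕ)
      rw [Fin.coe_castSucc]
      exact h3 i.val i.isLt

lemma finsum_setG (ℓ k : ℕ) :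
    (∑ᶠ (π : Fin (ℓ + 1) → ℤ)
        (_ : IsDSF π ∧ π 0 = 0 ∧ π (Fin.last ℓ) = -(k : ℤ) ∧
          ∀ i : Fin ℓ, -(k : ℤ) < π i.castSucc),
        walkWeight π) = Gsum ℓ k := by
  have h0 : (∑ᶠ (π : Fin (ℓ + 1) → ℤ)
        (_ : IsDSF π ∧ π 0 = 0 ∧ π (Fin.last ℓ) = -(k : ℤ) ∧
          ∀ i : Fin ℓ, -(k : ℤ) < π i.castSucc),
        walkWeight π)
      = ∑ᶠ π ∈ {π : Fin (ℓ + 1) → ℤ | IsDSF π ∧ π 0 = 0 ∧ π (Fin.last ℓ) = -(k : ℤ) ∧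
          ∀ i : Fin ℓ, -(k : ℤ) < π i.castSucc}, walkWeight π := rfl
  rw [h0, setG_eq, finsum_mem_coe_finset,
    Finset.sum_image (fun σ _ τ _ h => toWalk_injective h)]
  exact Finset.sum_congr rfl fun σ _ => walkWeight_toWalk σ


lemma setD_eq (ℓ k : ℕ) :
    {π : Fin (ℓ + 1) → ℤ | IsDSF π ∧ π 0 = 0 ∧ π (Fin.last ℓ) = -(k : ℤ)}
      = ↑((Dset ℓ (-(k : ℤ))).image toWalk) := by
  ext π
  simp only [Set.mem_setOf_eq, Finset.coe_image, Set.mem_image, Finset.mem_coe]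
  constructor
  · rintro ⟨hdsf, h0, hlast⟩
    refine ⟨stepOf π, ?_, toWalk_stepOf h0⟩
    rw [mem_Dset]
    exact ⟨fun i => hdsf i, by rw [sum_stepOf h0, hlast]⟩
  · rintro ⟨σ, hσ, rfl⟩
    rw [mem_Dset] at hσ
    obtain ⟨h1, h2⟩ := hσ
    refine ⟨fun i => ?_, ?_, ?_⟩
    · rw [toWalk_step]; exact h1 i
    · show psum σ ((0 : Fin (ℓ + 1)) : ℕ) = 0
      rw [Fin.val_zero, psum_zero]
    · show psum σ ((Fin.last ℓ : Fin (ℓ + 1)) : ℕ) = -(k : ℤ)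
      rw [Fin.val_last, psum_top, h2]

lemma finsum_setD (ℓ k : ℕ) :
    (∑ᶠ (π : Fin (ℓ + 1) → ℤ)
        (_ : IsDSF π ∧ π 0 = 0 ∧ π (Fin.last ℓ) = -(k : ℤ)),
        walkWeight π) = Dsum ℓ (-(k : ℤ)) := by
  have h0 : (∑ᶠ (π : Fin (ℓ + 1) → ℤ)
        (_ : IsDSF π ∧ π 0 = 0 ∧ π (Fin.last ℓ) = -(k : ℤ)),
        walkWeight π)
      = ∑ᶠ π ∈ {π : Fin (ℓ + 1) → ℤ | IsDSF π ∧ π 0 = 0 ∧ π (Fin.last ℓ) = -(k : ℤ)},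
          walkWeight π := rfl
  rw [h0, setD_eq, finsum_mem_coe_finset,
    Finset.sum_image (fun σ _ τ _ h => toWalk_injective h)]
  exact Finset.sum_congr rfl fun σ _ => walkWeight_toWalk σ

lemma excCoeff_eq (n : ℕ) : excCoeff n = Gsum n 1 := by
  rw [excCoeff, ← finsum_setG n 1]
  refine finsum_congr fun π => ?_
  have e : (IsDSF π ∧ π 0 = 0 ∧ π (Fin.last n) = -1 ∧ ∀ i : Fin n, 0 ≤ π i.castSucc)
      = (IsDSF π ∧ π 0 = 0 ∧ π (Fin.last n) = -((1 : ℕ) : ℤ) ∧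
          ∀ i : Fin n, -((1 : ℕ) : ℤ) < π i.castSucc) := by
    refine propext (and_congr_right fun _ => and_congr_right fun _ => ?_)
    constructor
    · rintro ⟨ha, hb⟩
      exact ⟨by rw [ha]; norm_num, fun i => by have := hb i; omega⟩
    · rintro ⟨ha, hb⟩
      exact ⟨by rw [ha]; norm_num, fun i => by have := hb i; push_cast at this ⊢; omega⟩
  rw [e]


/-! ### The counting lemma -/

def Char (S : ℕ → ℤ) (ℓ k : ℕ) (j : ℕ) : Prop :=
  (∀ t < j, S j < S t) ∧ ∀ t < ℓ, j ≤ t → S j - k < S t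

instance (S : ℕ → ℤ) (ℓ k j : ℕ) : Decidable (Char S ℓ k j) := by
  unfold Char; infer_instance

lemma count_char (S : ℕ → ℤ) (ℓ k : ℕ) (hℓ : 1 ≤ ℓ) (hk : 1 ≤ k)
    (h0 : S 0 = 0) (hstep : ∀ m, S m - 1 ≤ S (m + 1)) (hend : S ℓ = -(k : ℤ)) :
    ((Finset.range ℓ).filter (Char S ℓ k)).card = k := by
  classical
  have hne : ((Finset.range ℓ).image S).Nonempty :=
    ⟨S 0, Finset.mem_image_of_mem S (Finset.mem_range.2 (by omega))⟩
  set M := ((Finset.range ℓ).image S).min' hne with hMdef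
  have hMle : ∀ t < ℓ, M ≤ S t := fun t ht =>
    Finset.min'_le _ _ (Finset.mem_image_of_mem S (Finset.mem_range.2 ht))
  obtain ⟨t0, ht0, hSt0⟩ : ∃ t0, t0 < ℓ ∧ S t0 = M := by
    have := Finset.min'_mem _ hne
    rw [Finset.mem_image] at this
    obtain ⟨t0, ht0, h⟩ := this
    exact ⟨t0, Finset.mem_range.1 ht0, h⟩
  have hM : M ≤ -(k : ℤ) + 1 := by
    have h1 : M ≤ S (ℓ - 1) := hMle _ (by omega)
    have h2 : S (ℓ - 1) - 1 ≤ S ℓ := by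
      have := hstep (ℓ - 1)
      rwa [show ℓ - 1 + 1 = ℓ by omega] at this
    omega
  have hcard : ((Finset.range ℓ).filter (Char S ℓ k)).card
      = (Finset.Icc M (M + k - 1)).card := by
    refine Finset.card_bij (fun j _ => S j) ?_ ?_ ?_
    · intro j hj
      rw [Finset.mem_filter, Finset.mem_range] at hj
      obtain ⟨hjℓ, hc1, hc2⟩ := hj
      refine Finset.mem_Icc.2 ⟨hMle j hjℓ, ?_⟩
      rcases lt_or_ge t0 j with h | h
      · exact absurd (hc1 t0 h) (by have := hMle j hjℓ; omega)
      · have := hc2 t0 ht0 h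
        omega
    · intro j1 hj1 j2 hj2 he
      rw [Finset.mem_filter, Finset.mem_range] at hj1 hj2
      by_contra hne'
      rcases Nat.lt_or_ge j1 j2 with h | h
      · have := hj2.2.1 j1 h; omega
      · have := hj1.2.1 j2 (by omega); omega
    · intro v hv
      rw [Finset.mem_Icc] at hv
      have hv0 : v ≤ 0 := by omega
      have hex : ∃ t, t < ℓ ∧ S t ≤ v := ⟨t0, ht0, by omega⟩
      obtain ⟨j, hjdef⟩ : ∃ j, j = Nat.find hex := ⟨_, rfl⟩
      have hjℓ : j < ℓ := by rw [hjdef]; exact (Nat.find_spec hex).1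
      have hSj : S j ≤ v := by rw [hjdef]; exact (Nat.find_spec hex).2
      have hmin : ∀ t < j, v < S t := by
        rw [hjdef]
        intro t ht
        have := Nat.find_min hex ht
        push_neg at this
        exact this (by omega)
      have hSjv : S j = v := by
        rcases Nat.eq_zero_or_pos j with h | h
        · rw [h] at hSj ⊢
          omega
        · have h1 : v < S (j - 1) := hmin _ (by omega)
          have h2 : S (j - 1) - 1 ≤ S j := by
            have := hstep (j - 1)
            rwa [show j - 1 + 1 = j by omega] at this
          omega
      refine ⟨j, Finset.mem_filter.2 ⟨Finset.mem_range.2 hjℓ, ?_, ?_⟩, hSjv⟩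
      · intro t ht
        rw [hSjv]
        exact hmin t ht
      · intro t ht _
        have := hMle t ht
        omega
  rw [hcard, Int.card_Icc]
  omega


/-! ### Rotations -/

section Rot
variable [NeZero ℓ]

def rotE (j : Fin ℓ) (σ : Fin ℓ → ℤ) : Fin ℓ → ℤ := fun i => σ (i + j)

lemma Wt_rot (j : Fin ℓ) (σ : Fin ℓ → ℤ) : Wt (rotE j σ) = Wt σ :=
  Equiv.prod_comp (Equiv.addRight j) fun i => pw (σ i)

lemma sum_rot (j : Fin ℓ) (σ : Fin ℓ → ℤ) : ∑ i, rotE j σ i = ∑ i, σ i :=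
  Equiv.sum_comp (Equiv.addRight j) σ

lemma rot_mem_Dset {c : ℤ} (j : Fin ℓ) {σ : Fin ℓ → ℤ} (h : σ ∈ Dset ℓ c) :
    rotE j σ ∈ Dset ℓ c := by
  rw [mem_Dset] at h ⊢
  exact ⟨fun i => h.1 _, by rw [sum_rot]; exact h.2⟩

def unrot (j : Fin ℓ) (σ : Fin ℓ → ℤ) : Fin ℓ → ℤ := fun i => σ (i - j)

lemma rot_unrot (j : Fin ℓ) (σ : Fin ℓ → ℤ) : rotE j (unrot j σ) = σ := by
  funext i
  show σ (i + j - j) = σ i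
  rw [add_sub_cancel_right]

lemma unrot_rot (j : Fin ℓ) (σ : Fin ℓ → ℤ) : unrot j (rotE j σ) = σ := by
  funext i
  show σ (i - j + j) = σ i
  rw [sub_add_cancel]

lemma Wt_unrot (j : Fin ℓ) (σ : Fin ℓ → ℤ) : Wt (unrot j σ) = Wt σ := by
  rw [← Wt_rot j (unrot j σ), rot_unrot]

lemma unrot_mem_Dset {c : ℤ} (j : Fin ℓ) {σ : Fin ℓ → ℤ} (h : σ ∈ Dset ℓ c) :
    unrot j σ ∈ Dset ℓ c := by
  rw [mem_Dset] at h ⊢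
  refine ⟨fun i => h.1 _, ?_⟩
  rw [← sum_rot j, rot_unrot]
  exact h.2

lemma ext_rot (j : Fin ℓ) (σ : Fin ℓ → ℤ) {i : ℕ} (hi : i < ℓ) :
    ext (rotE j σ) i = ext σ ((i + (j : ℕ)) % ℓ) := by
  rw [ext_of_lt _ hi, ext_of_lt _ (Nat.mod_lt _ (by have := j.pos; omega))]
  exact congrArg σ (Fin.ext (Fin.val_add _ _))

lemma psum_rot (j : Fin ℓ) (σ : Fin ℓ → ℤ) :
    ∀ m, m ≤ ℓ → psum (rotE j σ) m =
      if (j : ℕ) + m ≤ ℓ then psum σ ((j : ℕ) + m) - psum σ (j : ℕ)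
      else psum σ ((j : ℕ) + m - ℓ) + psum σ ℓ - psum σ (j : ℕ) := by
  intro m
  induction m with
  | zero =>
    intro _
    rw [if_pos (by omega : (j : ℕ) + 0 ≤ ℓ)]
    simp
  | succ m ih =>
    intro hm
    have hjl : (j : ℕ) < ℓ := j.isLt
    rw [psum_succ, ih (by omega), ext_rot j σ (by omega : m < ℓ)]
    rcases lt_or_ge ((j : ℕ) + m) ℓ with h1 | h1
    · rw [if_pos (by omega : (j : ℕ) + m ≤ ℓ), Nat.mod_eq_of_lt (by omega : m + (j : ℕ) < ℓ)]
      rcases Nat.eq_or_lt_of_le (by omega : (j : ℕ) + m + 1 ≤ ℓ) with h2 | h2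
      all_goals rw [if_pos (by omega : (j : ℕ) + (m + 1) ≤ ℓ),
        show (j : ℕ) + (m + 1) = ((j : ℕ) + m) + 1 by omega, psum_succ,
        show m + (j : ℕ) = (j : ℕ) + m by omega]
      all_goals ring
    · rcases Nat.eq_or_lt_of_le h1 with h2 | h2
      · -- j + m = ℓ
        rw [if_pos (by omega : (j : ℕ) + m ≤ ℓ),
          show (m + (j : ℕ)) % ℓ = 0 by
            rw [show m + (j : ℕ) = ℓ by omega]; exact Nat.mod_self _,
          if_neg (by omega : ¬ (j : ℕ) + (m + 1) ≤ ℓ),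
          show (j : ℕ) + (m + 1) - ℓ = 0 + 1 by omega,
          show (j : ℕ) + m = ℓ by omega, psum_succ, psum_zero]
        ring
      · -- j + m > ℓ
        rw [if_neg (by omega : ¬ (j : ℕ) + m ≤ ℓ),
          show (m + (j : ℕ)) % ℓ = (j : ℕ) + m - ℓ by
            rw [Nat.mod_eq_sub_mod (by omega)]
            rw [show m + (j : ℕ) - ℓ = (j : ℕ) + m - ℓ by omega]
            exact Nat.mod_eq_of_lt (by omega),
          if_neg (by omega : ¬ (j : ℕ) + (m + 1) ≤ ℓ),
          show (j : ℕ) + (m + 1) - ℓ = ((j : ℕ) + m - ℓ) + 1 by omega, psum_succ]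
        ring

lemma rot_good_iff {k : ℕ} (hk : 1 ≤ k) {σ : Fin ℓ → ℤ} (hsum : ∑ i, σ i = -(k : ℤ))
    (j : Fin ℓ) :
    (∀ m < ℓ, -(k : ℤ) < psum (rotE j σ) m) ↔ Char (psum σ) ℓ k (j : ℕ) := by
  have hℓtop : psum σ ℓ = -(k : ℤ) := by rw [psum_top]; exact hsum
  have hjl : (j : ℕ) < ℓ := j.isLt
  constructor
  · intro H
    constructor
    · intro t ht
      have hm : t + ℓ - (j : ℕ) < ℓ := by omega
      have := H _ hm
      rw [psum_rot j σ _ (by omega)] at this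
      rcases Nat.eq_zero_or_pos t with rfl | htpos
      · rw [if_pos (by omega : (j : ℕ) + (0 + ℓ - (j : ℕ)) ≤ ℓ),
          show (j : ℕ) + (0 + ℓ - (j : ℕ)) = ℓ by omega, hℓtop] at this
        rw [psum_zero]
        omega
      · rw [if_neg (by omega : ¬ (j : ℕ) + (t + ℓ - (j : ℕ)) ≤ ℓ),
          show (j : ℕ) + (t + ℓ - (j : ℕ)) - ℓ = t by omega, hℓtop] at this
        omega
    · intro t ht hjt
      have := H (t - (j : ℕ)) (by omega)
      rw [psum_rot j σ _ (by omega),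
        if_pos (by omega : (j : ℕ) + (t - (j : ℕ)) ≤ ℓ),
        show (j : ℕ) + (t - (j : ℕ)) = t by omega] at this
      omega
  · intro H m hm
    obtain ⟨H1, H2⟩ := H
    rw [psum_rot j σ _ (by omega)]
    rcases lt_or_ge ((j : ℕ) + m) ℓ with h1 | h1
    · rw [if_pos (by omega)]
      have := H2 ((j : ℕ) + m) (by omega) (by omega)
      omega
    · rcases Nat.eq_or_lt_of_le h1 with h2 | h2
      · rw [if_pos (by omega)]
        have hj0 : 0 < (j : ℕ) := by omega
        have := H1 0 hj0
        rw [psum_zero] at this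
        rw [← h2, hℓtop]
        omega
      · rw [if_neg (by omega)]
        have := H1 ((j : ℕ) + m - ℓ) (by omega)
        rw [hℓtop]
        omega

end Rot


/-! ### Double counting -/

lemma card_rot_filter {k : ℕ} [NeZero ℓ] (hℓ : 1 ≤ ℓ) (hk : 1 ≤ k) {τ : Fin ℓ → ℤ}
    (hτ : τ ∈ Dset ℓ (-(k : ℤ))) :
    (Finset.univ.filter fun j : Fin ℓ => rotE j τ ∈ Gset ℓ k).card = k := by
  classical
  obtain ⟨h1, h2⟩ := mem_Dset.1 hτ
  have hiff : ∀ j : Fin ℓ, (rotE j τ ∈ Gset ℓ k) ↔ Char (psum τ) ℓ k (j : ℕ) := by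
    intro j
    rw [mem_Gset]
    constructor
    · intro h; exact (rot_good_iff hk h2 j).1 h.2.2
    · intro h
      exact ⟨fun i => h1 _, by rw [sum_rot]; exact h2, (rot_good_iff hk h2 j).2 h⟩
  have hcardeq : (Finset.univ.filter fun j : Fin ℓ => rotE j τ ∈ Gset ℓ k).card
      = ((Finset.range ℓ).filter (Char (psum τ) ℓ k)).card := by
    refine Finset.card_bij (fun j _ => (j : ℕ)) ?_ ?_ ?_
    · intro j hj
      rw [Finset.mem_filter] at hj
      exact Finset.mem_filter.2 ⟨Finset.mem_range.2 j.isLt, (hiff j).1 hj.2⟩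
    · intro j1 _ j2 _ h; exact Fin.ext h
    · intro t ht
      rw [Finset.mem_filter, Finset.mem_range] at ht
      exact ⟨⟨t, ht.1⟩, Finset.mem_filter.2 ⟨Finset.mem_univ _, (hiff _).2 ht.2⟩, rfl⟩
  rw [hcardeq]
  refine count_char (psum τ) ℓ k hℓ hk (psum_zero τ) ?_ (by rw [psum_top]; exact h2)
  intro m
  have := ext_ge_neg_one h1 m
  rw [psum_succ]
  omega

lemma Gset_subset_Dset {ℓ k : ℕ} : Gset ℓ k ⊆ Dset ℓ (-(k : ℤ)) := Finset.filter_subset _ _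

lemma nsmul_Gsum (ℓ k : ℕ) (hℓ : 1 ≤ ℓ) (hk : 1 ≤ k) :
    ℓ • Gsum ℓ k = k • Dsum ℓ (-(k : ℤ)) := by
  classical
  haveI : NeZero ℓ := ⟨by omega⟩
  have step1 : ∀ j : Fin ℓ, Gsum ℓ k
      = ∑ τ ∈ Dset ℓ (-(k : ℤ)), if rotE j τ ∈ Gset ℓ k then Wt τ else 0 := by
    intro j
    rw [Gsum, ← Finset.sum_filter]
    refine Finset.sum_nbij' (unrot j) (rotE j) ?_ ?_ ?_ ?_ ?_
    · intro σ hσ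
      exact Finset.mem_filter.2 ⟨unrot_mem_Dset j (Gset_subset_Dset hσ),
        by rw [rot_unrot]; exact hσ⟩
    · intro τ hτ
      exact (Finset.mem_filter.1 hτ).2
    · intro σ _
      exact rot_unrot j σ
    · intro τ _
      exact unrot_rot j τ
    · intro σ _
      exact (Wt_unrot j σ).symm
  calc ℓ • Gsum ℓ k = ∑ _j : Fin ℓ, Gsum ℓ k := by
        rw [Finset.sum_const, Finset.card_univ, Fintype.card_fin]
    _ = ∑ _j : Fin ℓ, ∑ τ ∈ Dset ℓ (-(k : ℤ)), if rotE _j τ ∈ Gset ℓ k then Wt τ else 0 :=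
        Finset.sum_congr rfl fun j _ => step1 j
    _ = ∑ τ ∈ Dset ℓ (-(k : ℤ)), ∑ j : Fin ℓ, if rotE j τ ∈ Gset ℓ k then Wt τ else 0 :=
        Finset.sum_comm
    _ = ∑ τ ∈ Dset ℓ (-(k : ℤ)), k • Wt τ := by
        refine Finset.sum_congr rfl fun τ hτ => ?_
        rw [← Finset.sum_filter, Finset.sum_const, card_rot_filter hℓ hk hτ]
    _ = k • Dsum ℓ (-(k : ℤ)) := by
        rw [Dsum, Finset.smul_sum]

lemma Gsum_eq_smul (ℓ k : ℕ) (hℓ : 1 ≤ ℓ) (hk : 1 ≤ k) :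
    Gsum ℓ k = ((k : ℚ) / (ℓ : ℚ)) • Dsum ℓ (-(k : ℤ)) := by
  have h2 : (ℓ : ℚ) • Gsum ℓ k = (k : ℚ) • Dsum ℓ (-(k : ℤ)) := by
    rw [Nat.cast_smul_eq_nsmul, Nat.cast_smul_eq_nsmul]
    exact nsmul_Gsum ℓ k hℓ hk
  have hℓ0 : (ℓ : ℚ) ≠ 0 := Nat.cast_ne_zero.2 (by omega)
  calc Gsum ℓ k = ((ℓ : ℚ)⁻¹ * (ℓ : ℚ)) • Gsum ℓ k := by
        rw [inv_mul_cancel₀ hℓ0, one_smul]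
    _ = (ℓ : ℚ)⁻¹ • ((ℓ : ℚ) • Gsum ℓ k) := by rw [mul_smul]
    _ = (ℓ : ℚ)⁻¹ • ((k : ℚ) • Dsum ℓ (-(k : ℤ))) := by rw [h2]
    _ = ((k : ℚ) / (ℓ : ℚ)) • Dsum ℓ (-(k : ℤ)) := by
        rw [← mul_smul, div_eq_mul_inv, mul_comm]


/-! ### Concatenation bijection for powers of U -/

def glue {a b : ℕ} (σ : Fin a → ℤ) (τ : Fin b → ℤ) : Fin ℓ → ℤ :=
  fun i => if hi : (i : ℕ) < a then σ ⟨i, hi⟩ else ext τ ((i : ℕ) - a)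

lemma glue_eq_app {a b : ℕ} (σ : Fin a → ℤ) (τ : Fin b → ℤ) (h : a + b = ℓ) :
    glue σ τ = app σ τ h := by
  funext i
  unfold glue app
  rcases lt_or_ge (i : ℕ) a with hi | hi
  · rw [dif_pos hi, dif_pos hi]
  · rw [dif_neg (by omega), dif_neg (by omega), ext_of_lt _ (by omega : (i : ℕ) - a < b)]

lemma Gset_nonzero_len {b k : ℕ} {τ : Fin b → ℤ} (hk : 1 ≤ k) (hτ : τ ∈ Gset b k) :
    1 ≤ b := by
  rcases Nat.eq_zero_or_pos b with rfl | h
  · have := (mem_Gset.1 hτ).2.1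
    rw [Finset.univ_eq_empty, Finset.sum_empty] at this
    omega
  · exact h

lemma app_mem_Gset {a b k : ℕ} {σ : Fin a → ℤ} {τ : Fin b → ℤ} (h : a + b = ℓ)
    (hσ : σ ∈ Gset a k) (hτ : τ ∈ Gset b 1) : app σ τ h ∈ Gset ℓ (k + 1) := by
  obtain ⟨hσ1, hσ2, hσ3⟩ := mem_Gset.1 hσ
  obtain ⟨hτ1, hτ2, hτ3⟩ := mem_Gset.1 hτ
  have hb : 1 ≤ b := Gset_nonzero_len le_rfl hτ
  have hσtop : psum σ a = -(k : ℤ) := by rw [psum_top]; exact hσ2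
  have hτtop : psum τ b = -1 := by rw [psum_top]; exact hτ2
  rw [mem_Gset]
  refine ⟨?_, ?_, ?_⟩
  · intro i
    unfold app
    split
    · exact hσ1 _
    · exact hτ1 _
  · rw [← psum_top, psum_app, if_neg (by omega : ¬ ℓ ≤ a),
      show ℓ - a = b by omega, hσtop, hτtop]
    push_cast
    ring
  · intro m hm
    rw [psum_app]
    split
    · rcases Nat.eq_or_lt_of_le (by assumption : m ≤ a) with he | hlt
      · rw [he, hσtop]; push_cast; omega
      · have := hσ3 m hlt; push_cast; omega
    · have hma : a < m := by omega
      have := hτ3 (m - a) (by omega)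
      rw [hσtop]
      push_cast
      omega

lemma psum_ge_neg {n : ℕ} {σ : Fin n → ℤ} (h1 : ∀ i, -1 ≤ σ i) (m : ℕ) :
    -(m : ℤ) ≤ psum σ m := by
  induction m with
  | zero => simp
  | succ m ih =>
    have := ext_ge_neg_one h1 m
    rw [psum_succ]
    push_cast
    omega

/-- first passage of level `-k`, made total -/
def fpa (k : ℕ) (ρ : Fin ℓ → ℤ) : ℕ :=
  Nat.find (⟨ℓ, Or.inr rfl⟩ : ∃ m, psum ρ m ≤ -(k : ℤ) ∨ m = ℓ)

lemma fpa_le (k : ℕ) (ρ : Fin ℓ → ℤ) : fpa k ρ ≤ ℓ :=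
  Nat.find_min' _ (Or.inr rfl)

lemma fpa_spec' (k : ℕ) (ρ : Fin ℓ → ℤ) :
    psum ρ (fpa k ρ) ≤ -(k : ℤ) ∨ fpa k ρ = ℓ := by
  have h := Nat.find_spec (⟨ℓ, Or.inr rfl⟩ : ∃ m, psum ρ m ≤ -(k : ℤ) ∨ m = ℓ)
  exact h

lemma fpa_min (k : ℕ) (ρ : Fin ℓ → ℤ) {t : ℕ} (ht : t < fpa k ρ) :
    -(k : ℤ) < psum ρ t := by
  have := Nat.find_min _ ht
  push_neg at this
  have h2 := this.1
  omega

lemma fpa_spec {k : ℕ} {ρ : Fin ℓ → ℤ} (hρ : ρ ∈ Gset ℓ (k + 1)) :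
    psum ρ (fpa k ρ) = -(k : ℤ) ∧ fpa k ρ < ℓ := by
  obtain ⟨h1, h2, _⟩ := mem_Gset.1 hρ
  have htop : psum ρ ℓ = -((k : ℤ) + 1) := by rw [psum_top, h2]; push_cast; ring
  have hle : psum ρ (fpa k ρ) ≤ -(k : ℤ) := by
    rcases Nat.find_spec (⟨ℓ, Or.inr rfl⟩ : ∃ m, psum ρ m ≤ -(k : ℤ) ∨ m = ℓ) with h | h
    · exact h
    · rw [show fpa k ρ = ℓ from h, htop]; omega
  have heq : psum ρ (fpa k ρ) = -(k : ℤ) := by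
    rcases Nat.eq_zero_or_pos (fpa k ρ) with h0 | h0
    · rw [h0] at hle ⊢
      rw [psum_zero] at hle ⊢
      omega
    · have hprev : -(k : ℤ) < psum ρ (fpa k ρ - 1) := fpa_min k ρ (by omega)
      have hstep : psum ρ (fpa k ρ - 1) - 1 ≤ psum ρ (fpa k ρ) := by
        have h3 := ext_ge_neg_one h1 (fpa k ρ - 1)
        have := psum_succ ρ (fpa k ρ - 1)
        rw [show fpa k ρ - 1 + 1 = fpa k ρ by omega] at this
        omega
      omega
  refine ⟨heq, ?_⟩
  rcases Nat.eq_or_lt_of_le (fpa_le k ρ) with h | h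
  · rw [h, htop] at heq
    omega
  · exact h

lemma hsplit (k : ℕ) (ρ : Fin ℓ → ℤ) : fpa k ρ + (ℓ - fpa k ρ) = ℓ := by
  have := fpa_le k ρ; omega

def jmapU (k : ℕ) (ρ : Fin ℓ → ℤ) : (p : ℕ × ℕ) × ((Fin p.1 → ℤ) × (Fin p.2 → ℤ)) :=
  ⟨(fpa k ρ, ℓ - fpa k ρ), (takeF (hsplit k ρ) ρ, dropF (hsplit k ρ) ρ)⟩

lemma jmapU_eq {k : ℕ} {ρ : Fin ℓ → ℤ} {a b : ℕ} (hab : a + b = ℓ) (ha : fpa k ρ = a) :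
    jmapU k ρ = ⟨(a, b), (takeF hab ρ, dropF hab ρ)⟩ := by
  subst ha
  have hb : b = ℓ - fpa k ρ := by omega
  subst hb
  rfl

lemma jmapU_mem {k : ℕ} {ρ : Fin ℓ → ℤ} (hρ : ρ ∈ Gset ℓ (k + 1)) :
    (takeF (hsplit k ρ) ρ ∈ Gset (fpa k ρ) k) ∧
      (dropF (hsplit k ρ) ρ ∈ Gset (ℓ - fpa k ρ) 1) := by
  obtain ⟨h1, h2, h3⟩ := mem_Gset.1 hρ
  obtain ⟨hfp, hfl⟩ := fpa_spec hρ
  have htop : psum ρ ℓ = -((k : ℤ) + 1) := by rw [psum_top, h2]; push_cast; ring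
  constructor
  · rw [mem_Gset]
    refine ⟨fun i => h1 _, ?_, ?_⟩
    · rw [← psum_top, psum_take _ _ le_rfl, hfp]
    · intro m hm
      rw [psum_take _ _ (by omega)]
      exact fpa_min k ρ hm
  · rw [mem_Gset]
    refine ⟨fun i => h1 _, ?_, ?_⟩
    · rw [← psum_top, psum_drop _ _ le_rfl, show fpa k ρ + (ℓ - fpa k ρ) = ℓ from hsplit k ρ,
        htop, hfp]
      push_cast
      ring
    · intro t ht
      rw [psum_drop _ _ (by omega), hfp]
      have := h3 (fpa k ρ + t) (by omega)
      push_cast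
      omega

lemma concat_step (ℓ k : ℕ) :
    ∑ p ∈ Finset.HasAntidiagonal.antidiagonal ℓ, Gsum p.1 k * Gsum p.2 1 = Gsum ℓ (k + 1) := by
  classical
  have e1 : ∀ p : ℕ × ℕ, Gsum p.1 k * Gsum p.2 1
      = ∑ q ∈ Gset p.1 k ×ˢ Gset p.2 1, Wt q.1 * Wt q.2 := by
    intro p
    rw [Gsum, Gsum, Finset.sum_mul_sum, Finset.sum_product]
  rw [Finset.sum_congr rfl fun p _ => e1 p, Finset.sum_sigma']
  refine Finset.sum_nbij' (fun x => glue x.2.1 x.2.2) (jmapU k) ?_ ?_ ?_ ?_ ?_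
  · rintro ⟨⟨a, b⟩, σ, τ⟩ hx
    dsimp only at hx
    rw [Finset.mem_sigma, Finset.mem_product] at hx
    obtain ⟨hp, hσ, hτ⟩ := hx
    replace hp : (a, b) ∈ Finset.HasAntidiagonal.antidiagonal ℓ := hp
    replace hσ : σ ∈ Gset a k := hσ
    replace hτ : τ ∈ Gset b 1 := hτ
    have hab : a + b = ℓ := Finset.HasAntidiagonal.mem_antidiagonal.1 hp
    show glue σ τ ∈ Gset ℓ (k + 1)
    rw [glue_eq_app σ τ hab]
    exact app_mem_Gset hab hσ hτ
  · intro ρ hρ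
    rw [Finset.mem_sigma, Finset.mem_product]
    obtain ⟨hm1, hm2⟩ := jmapU_mem hρ
    exact ⟨Finset.HasAntidiagonal.mem_antidiagonal.2 (hsplit k ρ), hm1, hm2⟩
  · rintro ⟨⟨a, b⟩, σ, τ⟩ hx
    dsimp only at hx
    rw [Finset.mem_sigma, Finset.mem_product] at hx
    obtain ⟨hp, hσ, hτ⟩ := hx
    replace hp : (a, b) ∈ Finset.HasAntidiagonal.antidiagonal ℓ := hp
    replace hσ : σ ∈ Gset a k := hσ
    replace hτ : τ ∈ Gset b 1 := hτ
    have hab : a + b = ℓ := Finset.HasAntidiagonal.mem_antidiagonal.1 hp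
    obtain ⟨hσ1, hσ2, hσ3⟩ := mem_Gset.1 hσ
    have hσtop : psum σ a = -(k : ℤ) := by rw [psum_top]; exact hσ2
    show jmapU k (glue σ τ) = ⟨(a, b), (σ, τ)⟩
    rw [glue_eq_app σ τ hab]
    have hfa : fpa k (app σ τ hab) = a := by
      have hle : fpa k (app σ τ hab) ≤ a :=
        Nat.find_min' _ (Or.inl (by rw [psum_app, if_pos le_rfl, hσtop]))
      rcases Nat.eq_or_lt_of_le hle with h | h
      · exact h
      · exfalso
        rcases fpa_spec' k (app σ τ hab) with hc | hc
        · rw [psum_app, if_pos (by omega)] at hc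
          have := hσ3 _ h
          omega
        · omega
    rw [jmapU_eq hab hfa, take_app, drop_app]
  · intro ρ hρ
    show glue (takeF (hsplit k ρ) ρ) (dropF (hsplit k ρ) ρ) = ρ
    rw [glue_eq_app _ _ (hsplit k ρ)]
    exact app_take_drop _ ρ
  · rintro ⟨⟨a, b⟩, σ, τ⟩ hx
    dsimp only at hx
    rw [Finset.mem_sigma, Finset.mem_product] at hx
    obtain ⟨hp, _, _⟩ := hx
    have hab : a + b = ℓ := Finset.HasAntidiagonal.mem_antidiagonal.1 hp
    show Wt σ * Wt τ = Wt (glue σ τ)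
    rw [glue_eq_app σ τ hab, Wt_app]


lemma Gsum_zero_zero : Gsum 0 0 = 1 := by
  have h : Gset 0 0 = {fun i => i.elim0} := by
    ext σ
    simp only [Finset.mem_singleton]
    constructor
    · intro _
      funext i
      exact i.elim0
    · intro _
      rw [mem_Gset]
      exact ⟨fun i => i.elim0, by simp, fun m hm => by omega⟩
  rw [Gsum, h, Finset.sum_singleton, Wt]
  simp

lemma Gsum_pos_zero (hℓ : 1 ≤ ℓ) : Gsum ℓ 0 = 0 := by
  have h : Gset ℓ 0 = ∅ := by
    refine Finset.eq_empty_of_forall_notMem fun σ hσ => ?_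
    have := (mem_Gset.1 hσ).2.2 0 (by omega)
    rw [psum_zero] at this
    norm_num at this
  rw [Gsum, h, Finset.sum_empty]

lemma coeffU (k ℓ : ℕ) : PowerSeries.coeff ℓ (Uexc ^ k) = Gsum ℓ k := by
  induction k generalizing ℓ with
  | zero =>
    rw [pow_zero, PowerSeries.coeff_one]
    rcases Nat.eq_zero_or_pos ℓ with rfl | h
    · rw [if_pos rfl, Gsum_zero_zero]
    · rw [if_neg (by omega), Gsum_pos_zero h]
  | succ k ih =>
    rw [pow_succ, PowerSeries.coeff_mul, ← concat_step ℓ k]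
    refine Finset.sum_congr rfl fun p _ => ?_
    rw [ih p.1, Uexc, PowerSeries.coeff_mk, excCoeff_eq]


/-! ### The P series side -/

def Qser : PowerSeries Rp := PowerSeries.mk fun n => pw ((n : ℤ) - 1)

def oneStep (v : ℤ) : Fin 1 → ℤ := fun _ => v

lemma Wt_oneStep (v : ℤ) : Wt (oneStep v) = pw v := by
  rw [Wt]
  simp [oneStep]

lemma Dset_zero_empty {c : ℤ} (hc : c ≠ 0) : Dset 0 c = ∅ := by
  refine Finset.eq_empty_of_forall_notMem fun σ hσ => ?_
  have := (mem_Dset.1 hσ).2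
  rw [Finset.univ_eq_empty, Finset.sum_empty] at this
  exact hc this.symm

lemma Dsum_zero (c : ℤ) : Dsum 0 c = if c = 0 then 1 else 0 := by
  rcases eq_or_ne c 0 with rfl | hc
  · rw [if_pos rfl]
    have h : Dset 0 0 = {fun i => i.elim0} := by
      ext σ
      simp only [Finset.mem_singleton]
      constructor
      · intro _
        funext i
        exact i.elim0
      · intro _
        rw [mem_Dset]
        exact ⟨fun i => i.elim0, by simp⟩
    rw [Dsum, h, Finset.sum_singleton, Wt]
    simp
  · rw [if_neg hc, Dsum, Dset_zero_empty hc, Finset.sum_empty]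

lemma Dsum_too_low {c : ℤ} (hc : c < -(ℓ : ℤ)) : Dsum ℓ c = 0 := by
  have h : Dset ℓ c = ∅ := by
    refine Finset.eq_empty_of_forall_notMem fun σ hσ => ?_
    obtain ⟨h1, h2⟩ := mem_Dset.1 hσ
    have := psum_ge_neg h1 ℓ
    rw [psum_top, h2] at this
    omega
  rw [Dsum, h, Finset.sum_empty]

lemma psum_oneStep (v : ℤ) : psum (oneStep v) 1 = v := by
  rw [psum, Finset.sum_range_one, ext_of_lt _ (by omega : (0 : ℕ) < 1)]
  rfl

def jmapD (ρ : Fin (ℓ + 1) → ℤ) : (p : ℕ × ℕ) × (Fin ℓ → ℤ) :=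
  ⟨((psum ρ ℓ + ℓ).toNat, (ρ ⟨ℓ, by omega⟩ + 1).toNat), takeF rfl ρ⟩

lemma jmapD_eq {ρ : Fin (ℓ + 1) → ℤ} {p1 p2 : ℕ} (h1 : (psum ρ ℓ + ℓ).toNat = p1)
    (h2 : (ρ ⟨ℓ, by omega⟩ + 1).toNat = p2) :
    jmapD ρ = ⟨(p1, p2), takeF rfl ρ⟩ := by
  subst h1
  subst h2
  rfl

lemma coeffQ (ℓ n : ℕ) : PowerSeries.coeff n (Qser ^ ℓ) = Dsum ℓ ((n : ℤ) - ℓ) := by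
  classical
  induction ℓ generalizing n with
  | zero =>
    rw [pow_zero, PowerSeries.coeff_one, Dsum_zero]
    rcases Nat.eq_zero_or_pos n with rfl | h
    · norm_num
    · rw [if_neg (by omega), if_neg (by push_cast; omega)]
  | succ ℓ ih =>
    rw [pow_succ, PowerSeries.coeff_mul]
    have e1 : ∀ p : ℕ × ℕ, (PowerSeries.coeff p.1) (Qser ^ ℓ) * (PowerSeries.coeff p.2) Qser
        = ∑ σ ∈ Dset ℓ ((p.1 : ℤ) - ℓ), Wt σ * pw ((p.2 : ℤ) - 1) := by
      intro p
      rw [ih p.1, Qser, PowerSeries.coeff_mk, Dsum, Finset.sum_mul]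
    rw [Finset.sum_congr rfl fun p _ => e1 p, Finset.sum_sigma']
    refine Finset.sum_nbij' (fun x => glue x.2 (oneStep ((x.1.2 : ℤ) - 1))) jmapD ?_ ?_ ?_ ?_ ?_
    · rintro ⟨⟨p1, p2⟩, σ⟩ hx
      dsimp only at hx ⊢
      rw [Finset.mem_sigma] at hx
      obtain ⟨hp, hσ⟩ := hx
      replace hp : (p1, p2) ∈ Finset.HasAntidiagonal.antidiagonal n := hp
      replace hσ : σ ∈ Dset ℓ ((p1 : ℤ) - ℓ) := hσ
      have hpn : p1 + p2 = n := Finset.HasAntidiagonal.mem_antidiagonal.1 hp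
      obtain ⟨h1, h2⟩ := mem_Dset.1 hσ
      rw [glue_eq_app _ _ rfl, mem_Dset]
      constructor
      · intro i
        unfold app
        split
        · exact h1 _
        · show -1 ≤ (p2 : ℤ) - 1
          omega
      · rw [← psum_top, psum_app, if_neg (by omega : ¬ ℓ + 1 ≤ ℓ),
          show ℓ + 1 - ℓ = 1 by omega, psum_oneStep, psum_top, h2]
        push_cast
        omega
    · intro ρ hρ
      obtain ⟨h1, h2⟩ := mem_Dset.1 hρ
      rw [Finset.mem_sigma]
      have hlast : ρ ⟨ℓ, by omega⟩ = ext ρ ℓ := (ext_of_lt ρ (by omega)).symm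
      have hsp : psum ρ (ℓ + 1) = (n : ℤ) - (ℓ + 1) := by rw [psum_top, h2]; push_cast; ring
      have hss : psum ρ (ℓ + 1) = psum ρ ℓ + ext ρ ℓ := psum_succ ρ ℓ
      have hge : -(ℓ : ℤ) ≤ psum ρ ℓ := psum_ge_neg h1 ℓ
      have hlge : -1 ≤ ext ρ ℓ := ext_ge_neg_one h1 ℓ
      constructor
      · show ((psum ρ ℓ + ℓ).toNat, (ρ ⟨ℓ, by omega⟩ + 1).toNat) ∈ Finset.HasAntidiagonal.antidiagonal n
        rw [Finset.HasAntidiagonal.mem_antidiagonal, hlast]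
        omega
      · show takeF rfl ρ ∈ Dset ℓ (((psum ρ ℓ + ℓ).toNat : ℤ) - ℓ)
        rw [mem_Dset]
        refine ⟨fun i => h1 _, ?_⟩
        rw [← psum_top, psum_take rfl ρ le_rfl]
        omega
    · rintro ⟨⟨p1, p2⟩, σ⟩ hx
      dsimp only at hx ⊢
      rw [Finset.mem_sigma] at hx
      obtain ⟨hp, hσ⟩ := hx
      replace hσ : σ ∈ Dset ℓ ((p1 : ℤ) - ℓ) := hσ
      obtain ⟨h1, h2⟩ := mem_Dset.1 hσ
      rw [glue_eq_app _ _ rfl]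
      have hps : psum (app σ (oneStep ((p2 : ℤ) - 1)) rfl) ℓ = (p1 : ℤ) - ℓ := by
        rw [psum_app, if_pos le_rfl, psum_top, h2]
      have hlv : app σ (oneStep ((p2 : ℤ) - 1)) rfl ⟨ℓ, by omega⟩ = (p2 : ℤ) - 1 := by
        show (if hi : ℓ < ℓ then _ else _) = _
        rw [dif_neg (by omega)]
        rfl
      rw [jmapD_eq (p1 := p1) (p2 := p2) (by rw [hps]; omega) (by rw [hlv]; omega), take_app]
    · intro ρ hρ
      obtain ⟨h1, h2⟩ := mem_Dset.1 hρ
      have hlast : (((ρ ⟨ℓ, by omega⟩ + 1).toNat : ℤ)) - 1 = ρ ⟨ℓ, by omega⟩ := by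
        have := h1 ⟨ℓ, by omega⟩
        omega
      rw [show jmapD ρ = ⟨((psum ρ ℓ + ℓ).toNat, (ρ ⟨ℓ, by omega⟩ + 1).toNat), takeF rfl ρ⟩
          from rfl]
      show glue (takeF rfl ρ) (oneStep (((ρ ⟨ℓ, by omega⟩ + 1).toNat : ℤ) - 1)) = ρ
      rw [glue_eq_app _ _ rfl, hlast]
      have hdrop : oneStep (ρ ⟨ℓ, by omega⟩) = dropF (rfl : ℓ + 1 = ℓ + 1) ρ := by
        funext i
        have hi : (i : ℕ) = 0 := by omega
        show ρ ⟨ℓ, by omega⟩ = ρ ⟨ℓ + (i : ℕ), by omega⟩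
        exact congrArg ρ (Fin.ext (show ℓ = ℓ + (i : ℕ) by omega))
      rw [hdrop]
      exact app_take_drop rfl ρ
    · rintro ⟨⟨p1, p2⟩, σ⟩ hx
      dsimp only
      rw [glue_eq_app _ _ rfl, Wt_app, Wt_oneStep]

lemma ofPS_coeff_neg (f : PowerSeries Rp) {n : ℤ} (hn : n < 0) :
    (HahnSeries.ofPowerSeries ℤ Rp f).coeff n = 0 := by
  rw [HahnSeries.ofPowerSeries_apply]
  refine HahnSeries.embDomain_notin_range ?_
  rintro ⟨m, hm⟩
  have : ((m : ℕ) : ℤ) = n := hm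
  omega

lemma Pser_eq : Pser = HahnSeries.single (-1 : ℤ) 1 * HahnSeries.ofPowerSeries ℤ Rp Qser := by
  ext n
  rw [Pser, HahnSeries.coeff_add]
  have hsm : (HahnSeries.single (-1 : ℤ) (1 : Rp) * HahnSeries.ofPowerSeries ℤ Rp Qser).coeff n
      = (HahnSeries.ofPowerSeries ℤ Rp Qser).coeff (n + 1) := by
    have h := HahnSeries.coeff_single_mul_add (r := (1 : Rp))
      (x := HahnSeries.ofPowerSeries ℤ Rp Qser) (a := n + 1) (b := -1)
    rw [show (n + 1) + (-1 : ℤ) = n by ring, one_mul] at h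
    exact h
  rw [hsm]
  rcases lt_trichotomy n (-1) with h | h | h
  · rw [HahnSeries.coeff_single_of_ne (by omega), ofPS_coeff_neg _ (by omega),
      ofPS_coeff_neg _ (by omega)]
    ring
  · subst h
    rw [HahnSeries.coeff_single_same, ofPS_coeff_neg _ (by omega),
      show (-1 : ℤ) + 1 = ((0 : ℕ) : ℤ) by norm_num,
      HahnSeries.ofPowerSeries_apply_coeff, Qser, PowerSeries.coeff_mk, add_zero]
    norm_num
  · rw [HahnSeries.coeff_single_of_ne (by omega)]
    obtain ⟨m, rfl⟩ := Int.eq_ofNat_of_zero_le (by omega : 0 ≤ n)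
    rw [HahnSeries.ofPowerSeries_apply_coeff, PowerSeries.coeff_mk,
      show ((m : ℤ) + 1) = ((m + 1 : ℕ) : ℤ) by push_cast; ring,
      HahnSeries.ofPowerSeries_apply_coeff, Qser, PowerSeries.coeff_mk, zero_add]
    congr 1
    push_cast
    ring

lemma Pser_pow_coeff (ℓ k : ℕ) :
    (Pser ^ ℓ).coeff (-(k : ℤ)) = Dsum ℓ (-(k : ℤ)) := by
  rw [Pser_eq, mul_pow, HahnSeries.single_pow, one_pow, ← map_pow]
  have hsm : (HahnSeries.single (ℓ • (-1 : ℤ)) (1 : Rp)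
        * HahnSeries.ofPowerSeries ℤ Rp (Qser ^ ℓ)).coeff (-(k : ℤ))
      = (HahnSeries.ofPowerSeries ℤ Rp (Qser ^ ℓ)).coeff ((ℓ : ℤ) - k) := by
    have h := HahnSeries.coeff_single_mul_add (r := (1 : Rp))
      (x := HahnSeries.ofPowerSeries ℤ Rp (Qser ^ ℓ)) (a := (ℓ : ℤ) - k) (b := ℓ • (-1 : ℤ))
    rw [show ((ℓ : ℤ) - k) + ℓ • (-1 : ℤ) = -(k : ℤ) by
        rw [nsmul_eq_mul]; push_cast; ring, one_mul] at h
    exact h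
  rw [hsm]
  rcases le_or_gt (k : ℤ) (ℓ : ℤ) with h | h
  · rw [show ((ℓ : ℤ) - k) = ((ℓ - k : ℕ) : ℤ) by push_cast [Nat.cast_sub (by omega : k ≤ ℓ)]; ring,
      HahnSeries.ofPowerSeries_apply_coeff, coeffQ]
    congr 1
    push_cast [Nat.cast_sub (by omega : k ≤ ℓ)]
    ring
  · rw [ofPS_coeff_neg _ (by omega), Dsum_too_low (by omega)]

end CycleAux

/-- Cycle lemma for downward skip-free walks: for `k, ℓ ≥ 1`, the weighted count of
`ℓ`-step downward skip-free walks from `0` to `-k` remaining strictly above `-k` before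
the last step equals `(k/ℓ)` times the weighted count of all `ℓ`-step downward skip-free
walks from `0` to `-k`; in generating-function terms, `[s^ℓ] U(s)^k = (k/ℓ)·[u^{-k}] P(u)^ℓ`. -/


theorem cycle_lemma (k ℓ : ℕ) (hk : 1 ≤ k) (hℓ : 1 ≤ ℓ) :
    (∑ᶠ (π : Fin (ℓ + 1) → ℤ)
        (_ : IsDSF π ∧ π 0 = 0 ∧ π (Fin.last ℓ) = -(k : ℤ) ∧
          ∀ i : Fin ℓ, -(k : ℤ) < π i.castSucc),
        walkWeight π)
      = ((k : ℚ) / (ℓ : ℚ)) •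
        (∑ᶠ (π : Fin (ℓ + 1) → ℤ)
          (_ : IsDSF π ∧ π 0 = 0 ∧ π (Fin.last ℓ) = -(k : ℤ)), walkWeight π) ∧
    PowerSeries.coeff ℓ (Uexc ^ k)
      = ((k : ℚ) / (ℓ : ℚ)) • (Pser ^ ℓ).coeff (-(k : ℤ)) := by
  constructor
  · rw [CycleAux.finsum_setG ℓ k, CycleAux.finsum_setD ℓ k]
    exact CycleAux.Gsum_eq_smul ℓ k hℓ hk
  · rw [CycleAux.coeffU k ℓ, CycleAux.Pser_pow_coeff ℓ k]
    exact CycleAux.Gsum_eq_smul ℓ k hℓ hk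

end
end

section
/- (Formal Wiener–Hopf factorization) In the ring ℚ[p_{−1},p₀,...]((u))[[s]] one has 1 − sP(u) = (1 − U(s)/u)·(1 − Σ_{h≥0} A_h^>(s) u^h), where U(s) is the excursion generating function and A_h^>(s) is the generating function of strict arches of tilt h (nonempty DSF walks from 0 to h staying at positions > h strictly in between). -/
noncomputable section

/-- The total weight of strict arches of tilt `h` with `ℓ` steps: nonempty downward
skip-free walks from `0` to `h` staying at positions `> h` strictly in between. -/
def archCoeff (h : ℕ) (ℓ : ℕ) : Rp :=
  ∑ᶠ (π : Fin (ℓ + 1) → ℤ)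
    (_ : 1 ≤ ℓ ∧ IsDSF π ∧ π 0 = 0 ∧ π (Fin.last ℓ) = (h : ℤ) ∧
      ∀ i : Fin ℓ, i.castSucc ≠ 0 → (h : ℤ) < π i.castSucc),
    walkWeight π

/-! ### ℕ-indexed walks -/

/-- weight of the first `ℓ` steps of `f`. -/
def wt (f : ℕ → ℤ) (ℓ : ℕ) : Rp := ∏ i ∈ Finset.range ℓ, pw (f (i+1) - f i)

/-- generalized strict arches of tilt `h` with `ℓ` steps, as functions `ℕ → ℤ`
extended by `h` beyond `ℓ`. -/
def Gset (h : ℤ) (ℓ : ℕ) : Set (ℕ → ℤ) :=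
  {f | (∀ i < ℓ, -1 ≤ f (i+1) - f i) ∧ f 0 = 0 ∧
    (∀ i, 0 < i → i < ℓ → h < f i) ∧ (∀ i, ℓ ≤ i → f i = h)}

def gen (h : ℤ) (ℓ : ℕ) : Rp := if ℓ = 0 then 0 else ∑ᶠ f ∈ Gset h ℓ, wt f ℓ

lemma dsf_lb {f : ℕ → ℤ} {ℓ : ℕ} (hD : ∀ i < ℓ, -1 ≤ f (i+1) - f i) :
    ∀ i ≤ ℓ, f 0 - i ≤ f i := by
  intro i hi
  induction i with
  | zero => simp
  | succ k ih =>
    have h1 := hD k (by omega)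
    have h2 := ih (by omega)
    push_cast
    omega

lemma dsf_ub {f : ℕ → ℤ} {ℓ : ℕ} (hD : ∀ i < ℓ, -1 ≤ f (i+1) - f i) :
    ∀ i ≤ ℓ, f i - (ℓ - i : ℕ) ≤ f ℓ := by
  intro i hi
  have key : ∀ j, i ≤ j → j ≤ ℓ → f i - (j - i : ℕ) ≤ f j := by
    intro j
    induction j with
    | zero => intro h1 h2; interval_cases i; simp
    | succ k ih =>
      intro h1 h2
      rcases Nat.eq_or_lt_of_le h1 with h | h
      · subst h; simp
      · have h3 := ih (by omega) (by omega)
        have h4 := hD k (by omega)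
        have h5 : ((k + 1 - i : ℕ) : ℤ) = (k - i : ℕ) + 1 := by omega
        omega
  exact key ℓ hi le_rfl

lemma Gset_finite (h : ℤ) (ℓ : ℕ) : (Gset h ℓ).Finite := by
  have hsub : (fun (f : ℕ → ℤ) => (fun i : Fin (ℓ+1) => f i)) '' Gset h ℓ ⊆
      Set.pi Set.univ (fun _ : Fin (ℓ+1) => Set.Icc (-(ℓ:ℤ)) (h + ℓ)) := by
    rintro _ ⟨f, hf, rfl⟩
    intro i _
    obtain ⟨hD, h0, _, hend⟩ := hf
    obtain ⟨k, hk⟩ := i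
    have hi : k ≤ ℓ := by omega
    have h1 := dsf_lb hD k hi
    have h2 := dsf_ub hD k hi
    have h3 := hend ℓ le_rfl
    simp only [Set.mem_Icc]
    constructor
    · omega
    · omega
  have hfin : ((fun (f : ℕ → ℤ) => (fun i : Fin (ℓ+1) => f i)) '' Gset h ℓ).Finite :=
    Set.Finite.subset (Set.Finite.pi (fun _ => Set.finite_Icc _ _)) hsub
  refine Set.Finite.of_finite_image hfin ?_
  intro f hf g hg hfg
  funext i
  rcases le_or_gt i ℓ with hi | hi
  · have := congrFun hfg ⟨i, by omega⟩
    simpa using this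
  · rw [hf.2.2.2 i (by omega), hg.2.2.2 i (by omega)]


lemma gen_eq_fin (h : ℤ) (ℓ : ℕ) (hℓ : 1 ≤ ℓ) :
    gen h ℓ = ∑ᶠ π ∈ {π : Fin (ℓ+1) → ℤ | IsDSF π ∧ π 0 = 0 ∧ π (Fin.last ℓ) = h ∧
      ∀ i : Fin ℓ, i.castSucc ≠ 0 → h < π i.castSucc}, walkWeight π := by
  rw [gen, if_neg (by omega)]
  refine finsum_mem_eq_of_bijOn (fun f => fun i : Fin (ℓ+1) => f i) ⟨?_, ?_, ?_⟩ ?_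
  · -- MapsTo
    rintro f ⟨hD, h0, hint, hend⟩
    refine ⟨?_, ?_, ?_, ?_⟩
    · intro i
      simp only [Fin.val_succ, Fin.coe_castSucc]
      exact hD i.val i.isLt
    · simpa using h0
    · simpa using hend ℓ le_rfl
    · intro i hi
      simp only [Fin.coe_castSucc]
      refine hint i.val ?_ i.isLt
      by_contra hc
      exact hi (Fin.ext (by simpa using hc))
  · -- InjOn
    intro f hf g hg hfg
    funext i
    rcases le_or_gt i ℓ with hi | hi
    · have := congrFun hfg ⟨i, by omega⟩
      simpa using this
    · rw [hf.2.2.2 i (by omega), hg.2.2.2 i (by omega)]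
  · -- SurjOn
    rintro π ⟨hD, h0, hlast, hint⟩
    refine ⟨fun i => if hi : i ≤ ℓ then π ⟨i, by omega⟩ else h, ⟨?_, ?_, ?_, ?_⟩, ?_⟩
    · intro i hi
      beta_reduce
      rw [dif_pos (by omega : i + 1 ≤ ℓ), dif_pos (by omega : i ≤ ℓ)]
      exact hD ⟨i, hi⟩
    · beta_reduce
      rw [dif_pos (by omega : 0 ≤ ℓ)]; exact h0
    · intro i h1 h2
      beta_reduce
      rw [dif_pos (by omega : i ≤ ℓ)]
      exact hint ⟨i, h2⟩ (fun hc => by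
        have : i = 0 := by simpa using congrArg Fin.val hc
        omega)
    · intro i hi
      beta_reduce
      rcases eq_or_lt_of_le hi with rfl | hlt
      · rw [dif_pos le_rfl]; exact hlast
      · rw [dif_neg (by omega)]
    · funext i
      show (if hi : (i:ℕ) ≤ ℓ then π ⟨i, by omega⟩ else h) = π i
      rw [dif_pos (by omega : (i : ℕ) ≤ ℓ)]
  · -- weights
    intro f _
    rw [wt, walkWeight, ← Fin.prod_univ_eq_prod_range (fun i => pw (f (i+1) - f i)) ℓ]
    exact Finset.prod_congr rfl (fun i _ => by simp [Fin.val_succ, Fin.coe_castSucc])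

lemma finsum_cond_eq_zero {p : Prop} (hp : ¬ p) (g : Rp) : (∑ᶠ _ : p, g) = 0 :=
  haveI : IsEmpty p := ⟨hp⟩
  finsum_of_isEmpty _

lemma excCoeff_eq_gen (ℓ : ℕ) : excCoeff ℓ = gen (-1) ℓ := by
  rcases Nat.eq_zero_or_pos ℓ with rfl | hℓ
  · rw [gen, if_pos rfl, excCoeff]
    refine finsum_eq_zero_of_forall_eq_zero (fun π => ?_)
    refine finsum_cond_eq_zero (fun hc => ?_) _
    have h0 := hc.2.1
    have h1 := hc.2.2.1
    rw [show Fin.last 0 = 0 from rfl, h0] at h1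
    exact absurd h1 (by norm_num)
  · rw [gen_eq_fin (-1) ℓ hℓ]
    have hS : {π : Fin (ℓ+1) → ℤ | IsDSF π ∧ π 0 = 0 ∧ π (Fin.last ℓ) = -1 ∧
          ∀ i : Fin ℓ, 0 ≤ π i.castSucc}
        = {π : Fin (ℓ+1) → ℤ | IsDSF π ∧ π 0 = 0 ∧ π (Fin.last ℓ) = (-1 : ℤ) ∧
          ∀ i : Fin ℓ, i.castSucc ≠ 0 → (-1 : ℤ) < π i.castSucc} := by
      ext π
      simp only [Set.mem_setOf_eq]
      constructor
      · rintro ⟨hD, h0, hlast, hnn⟩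
        exact ⟨hD, h0, hlast, fun i _ => by have := hnn i; omega⟩
      · rintro ⟨hD, h0, hlast, hpos⟩
        refine ⟨hD, h0, hlast, fun i => ?_⟩
        by_cases hi : i.castSucc = 0
        · rw [hi, h0]
        · have := hpos i hi; omega
    show (∑ᶠ π ∈ {π : Fin (ℓ+1) → ℤ | IsDSF π ∧ π 0 = 0 ∧ π (Fin.last ℓ) = -1 ∧
          ∀ i : Fin ℓ, 0 ≤ π i.castSucc}, walkWeight π) = _
    rw [hS]

lemma archCoeff_eq_gen (h ℓ : ℕ) : archCoeff h ℓ = gen (h : ℤ) ℓ := by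
  rcases Nat.eq_zero_or_pos ℓ with rfl | hℓ
  · rw [gen, if_pos rfl, archCoeff]
    refine finsum_eq_zero_of_forall_eq_zero (fun π => ?_)
    exact finsum_cond_eq_zero (fun hc => by omega) _
  · rw [gen_eq_fin (h : ℤ) ℓ hℓ]
    have hS : {π : Fin (ℓ+1) → ℤ | 1 ≤ ℓ ∧ IsDSF π ∧ π 0 = 0 ∧ π (Fin.last ℓ) = (h : ℤ) ∧
          ∀ i : Fin ℓ, i.castSucc ≠ 0 → (h : ℤ) < π i.castSucc}
        = {π : Fin (ℓ+1) → ℤ | IsDSF π ∧ π 0 = 0 ∧ π (Fin.last ℓ) = (h : ℤ) ∧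
          ∀ i : Fin ℓ, i.castSucc ≠ 0 → (h : ℤ) < π i.castSucc} := by
      ext π
      simp only [Set.mem_setOf_eq]
      exact ⟨fun h => h.2, fun h => ⟨hℓ, h⟩⟩
    show (∑ᶠ π ∈ {π : Fin (ℓ+1) → ℤ | 1 ≤ ℓ ∧ IsDSF π ∧ π 0 = 0 ∧ π (Fin.last ℓ) = (h : ℤ) ∧
          ∀ i : Fin ℓ, i.castSucc ≠ 0 → (h : ℤ) < π i.castSucc}, walkWeight π) = _
    rw [hS]

lemma gen_one (h : ℤ) : gen h 1 = pw h := by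
  rw [gen, if_neg one_ne_zero]
  by_cases hh : -1 ≤ h
  · have hset : Gset h 1 = {fun i => if i = 0 then 0 else h} := by
      ext f
      constructor
      · rintro ⟨hD, h0, _, hend⟩
        funext i
        rcases Nat.eq_zero_or_pos i with rfl | hi
        · simpa using h0
        · rw [if_neg (by omega)]; exact hend i hi
      · rintro rfl
        refine ⟨?_, rfl, ?_, ?_⟩
        · intro i hi
          interval_cases i
          simpa using hh
        · intro i h1 h2; omega
        · intro i hi
          beta_reduce
          rw [if_neg (by omega : ¬ i = 0)]
    rw [hset, finsum_mem_singleton, wt, Finset.prod_range_one]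
    norm_num
  · have hset : Gset h 1 = ∅ := by
      ext f
      simp only [Set.mem_empty_iff_false, iff_false]
      rintro ⟨hD, h0, _, hend⟩
      have := hD 0 (by omega)
      rw [h0, hend 1 le_rfl] at this
      omega
    rw [hset, finsum_mem_empty, pw, if_neg hh]


/-! ### the decomposition -/

lemma wt_split (f : ℕ → ℤ) {t n : ℕ} (ht : t ≤ n) :
    wt f n = wt f t * wt (fun i => f (t + i)) (n - t) := by
  conv_lhs => rw [wt, show n = t + (n - t) by omega, Finset.prod_range_add]
  rw [wt, wt]
  congr 1

lemma wt_congr {f g : ℕ → ℤ} {ℓ : ℕ} (h : ∀ i ≤ ℓ, f i = g i) : wt f ℓ = wt g ℓ :=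
  Finset.prod_congr rfl (fun i hi => by
    rw [Finset.mem_range] at hi
    rw [h i (by omega), h (i+1) (by omega)])

/-- first hitting time of level `h+1` (or `n` as fallback). -/
def hitT (h : ℤ) (n : ℕ) (f : ℕ → ℤ) : ℕ :=
  Nat.find (show ∃ t, (1 ≤ t ∧ f t = h + 1) ∨ t = n from ⟨n, Or.inr rfl⟩)

def AF (h : ℤ) (ℓ : ℕ) : Finset (ℕ → ℤ) :=
  if ℓ = 0 then ∅ else (Gset_finite h ℓ).toFinset

lemma mem_AF {h : ℤ} {ℓ : ℕ} {f : ℕ → ℤ} : f ∈ AF h ℓ ↔ ℓ ≠ 0 ∧ f ∈ Gset h ℓ := by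
  rw [AF]
  split_ifs with h0
  · simp [h0]
  · simp [Set.Finite.mem_toFinset, h0]

lemma gen_eq_sum_AF (h : ℤ) (ℓ : ℕ) : gen h ℓ = ∑ f ∈ AF h ℓ, wt f ℓ := by
  rw [gen, AF]
  split_ifs with h0
  · simp
  · exact finsum_mem_eq_finite_toFinset_sum _ _

lemma gen_rec (h : ℤ) (n : ℕ) (hn : 2 ≤ n) :
    gen h n = ∑ p ∈ Finset.HasAntidiagonal.antidiagonal n, gen (-1) p.1 * gen (h + 1) p.2 := by
  classical
  -- rewrite RHS as a sum over a sigma finset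
  have hra : ∀ p : ℕ × ℕ, gen (-1) p.1 * gen (h+1) p.2
      = ∑ q ∈ AF (-1) p.1 ×ˢ AF (h+1) p.2, wt q.1 p.1 * wt q.2 p.2 := by
    intro p
    rw [gen_eq_sum_AF, gen_eq_sum_AF, Finset.sum_mul_sum, ← Finset.sum_product']
  rw [Finset.sum_congr rfl (fun p _ => hra p), Finset.sum_sigma', gen_eq_sum_AF]
  -- the bijection
  set T : (ℕ → ℤ) → ℕ := fun f => hitT h n f with hT
  refine Finset.sum_nbij'
    (i := fun f => ⟨(n - T f, T f),
      (fun i => if i ≤ n - T f then f (T f + i) - (h+1) else -1,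
       fun i => if i ≤ T f then f i else h+1)⟩)
    (j := fun x => fun i => if i ≤ x.1.2 then x.2.2 i else (h+1) + x.2.1 (i - x.1.2))
    ?_ ?_ ?_ ?_ ?_
  · -- forward membership
    intro f hf
    obtain ⟨-, hD, h0, hint, hend⟩ := mem_AF.mp hf
    have hfn : f n = h := hend n le_rfl
    have hn1 : f (n-1) = h + 1 := by
      have h1 : h < f (n-1) := hint (n-1) (by omega) (by omega)
      have h2 := hD (n-1) (by omega)
      have h3 : n - 1 + 1 = n := by omega
      rw [h3, hfn] at h2
      omega
    have hle : T f ≤ n - 1 := Nat.find_le (Or.inl ⟨by omega, hn1⟩)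
    have hspec : (1 ≤ T f ∧ f (T f) = h + 1) ∨ T f = n :=
      Nat.find_spec (show ∃ t, (1 ≤ t ∧ f t = h + 1) ∨ t = n from ⟨n, Or.inr rfl⟩)
    have ht1 : 1 ≤ T f ∧ f (T f) = h + 1 := hspec.resolve_right (by omega)
    have hmin : ∀ s < T f, ¬((1 ≤ s ∧ f s = h + 1) ∨ s = n) :=
      fun s hs => Nat.find_min _ hs
    simp only [Finset.mem_sigma, Finset.HasAntidiagonal.mem_antidiagonal, Finset.mem_product]
    refine ⟨by omega, ?_, ?_⟩
    · -- excursion part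
      rw [mem_AF]
      refine ⟨by omega, ?_, ?_, ?_, ?_⟩
      · intro i hi
        beta_reduce
        rw [if_pos (by omega : i + 1 ≤ n - T f), if_pos (by omega : i ≤ n - T f)]
        have := hD (T f + i) (by omega)
        have he : T f + (i+1) = T f + i + 1 := by omega
        rw [he]
        omega
      · beta_reduce
        rw [if_pos (by omega : 0 ≤ n - T f)]
        have : T f + 0 = T f := by omega
        rw [this, ht1.2]
        ring
      · intro i h1 h2
        beta_reduce
        rw [if_pos (by omega : i ≤ n - T f)]
        have := hint (T f + i) (by omega) (by omega)
        omega
      · intro i hi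
        rcases eq_or_lt_of_le hi with heq | hlt
        · beta_reduce
          rw [if_pos (by omega : i ≤ n - T f)]
          have : T f + i = n := by omega
          rw [this, hfn]
          ring
        · beta_reduce
          rw [if_neg (by omega)]
    · -- arch part
      rw [mem_AF]
      refine ⟨by omega, ?_, ?_, ?_, ?_⟩
      · intro i hi
        beta_reduce
        rw [if_pos (by omega : i + 1 ≤ T f), if_pos (by omega : i ≤ T f)]
        exact hD i (by omega)
      · beta_reduce
        rw [if_pos (by omega : 0 ≤ T f)]
        exact h0
      · intro i h1 h2
        beta_reduce
        rw [if_pos (by omega : i ≤ T f)]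
        have hgt := hint i (by omega) (by omega)
        have hne : ¬(1 ≤ i ∧ f i = h + 1) := fun hc => hmin i h2 (Or.inl hc)
        omega
      · intro i hi
        rcases eq_or_lt_of_le hi with heq | hlt
        · beta_reduce
          rw [if_pos (by omega : i ≤ T f)]
          rw [← heq]
          exact ht1.2
        · beta_reduce
          rw [if_neg (by omega)]
  · -- backward membership
    rintro ⟨⟨x, y⟩, e, a⟩ hx
    show (fun i => if i ≤ y then a i else (h + 1) + e (i - y)) ∈ AF h n
    simp only [Finset.mem_sigma, Finset.HasAntidiagonal.mem_antidiagonal, Finset.mem_product] at hx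
    obtain ⟨hxy, he, ha⟩ := hx
    obtain ⟨hx0, heD, he0, heint, heend⟩ := mem_AF.mp he
    obtain ⟨hy0, haD, ha0, haint, haend⟩ := mem_AF.mp ha
    have hay : a y = h + 1 := haend y le_rfl
    rw [mem_AF]
    refine ⟨by omega, ?_, ?_, ?_, ?_⟩
    · intro i hi
      rcases lt_trichotomy i y with h1 | h1 | h1
      · beta_reduce
        rw [if_pos (by omega : i + 1 ≤ y), if_pos (by omega : i ≤ y)]
        exact haD i h1
      · subst h1
        beta_reduce
        rw [if_neg (by omega), if_pos le_rfl]
        have := heD 0 (by omega)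
        have h2 : i + 1 - i = 1 := by omega
        rw [h2, hay]
        norm_num at this
        omega
      · beta_reduce
        rw [if_neg (by omega), if_neg (by omega)]
        have := heD (i - y) (by omega)
        have h2 : i + 1 - y = i - y + 1 := by omega
        rw [h2]
        omega
    · beta_reduce
      rw [if_pos (by omega : 0 ≤ y)]
      exact ha0
    · intro i h1 h2
      rcases le_or_gt i y with h3 | h3
      · beta_reduce
        rw [if_pos h3]
        rcases eq_or_lt_of_le h3 with rfl | h4
        · omega
        · have := haint i h1 h4
          omega
      · beta_reduce
        rw [if_neg (by omega)]
        rcases eq_or_lt_of_le (show y + 1 ≤ i by omega) with h4 | h4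
        · have h5 : i - y = 1 := by omega
          rw [h5]
          have := heint 1 one_pos (by omega)
          omega
        · have := heint (i - y) (by omega) (by omega)
          omega
    · intro i hi
      beta_reduce
      rw [if_neg (by omega)]
      have := heend (i - y) (by omega)
      omega
  · -- left inverse
    intro f hf
    obtain ⟨-, hD, h0, hint, hend⟩ := mem_AF.mp hf
    have hfn : f n = h := hend n le_rfl
    have hn1 : f (n-1) = h + 1 := by
      have h1 : h < f (n-1) := hint (n-1) (by omega) (by omega)
      have h2 := hD (n-1) (by omega)
      have h3 : n - 1 + 1 = n := by omega
      rw [h3, hfn] at h2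
      omega
    have hle : T f ≤ n - 1 := Nat.find_le (Or.inl ⟨by omega, hn1⟩)
    funext i
    show (if i ≤ T f then (if i ≤ T f then f i else h+1)
      else (h+1) + (if i - T f ≤ n - T f then f (T f + (i - T f)) - (h+1) else -1)) = f i
    rcases le_or_gt i (T f) with h1 | h1
    · beta_reduce
      rw [if_pos h1, if_pos h1]
    · beta_reduce
      rw [if_neg (by omega)]
      rcases le_or_gt i n with h2 | h2
      · beta_reduce
        rw [if_pos (by omega)]
        have h3 : T f + (i - T f) = i := by omega
        rw [h3]
        ring
      · beta_reduce
        rw [if_neg (by omega), hend i (by omega)]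
        ring
  · -- right inverse
    rintro ⟨⟨x, y⟩, e, a⟩ hx
    show (⟨(n - hitT h n (fun i => if i ≤ y then a i else (h + 1) + e (i - y)),
              hitT h n (fun i => if i ≤ y then a i else (h + 1) + e (i - y))), _, _⟩ :
          Σ _ : ℕ × ℕ, (ℕ → ℤ) × (ℕ → ℤ)) = ⟨(x, y), (e, a)⟩
    simp only [Finset.mem_sigma, Finset.HasAntidiagonal.mem_antidiagonal, Finset.mem_product] at hx
    obtain ⟨hxy, he, ha⟩ := hx
    obtain ⟨hx0, heD, he0, heint, heend⟩ := mem_AF.mp he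
    obtain ⟨hy0, haD, ha0, haint, haend⟩ := mem_AF.mp ha
    have hay : a y = h + 1 := haend y le_rfl
    set g : ℕ → ℤ := fun i => if i ≤ y then a i else (h+1) + e (i - y) with hg
    have hTg : T g = y := by
      show hitT h n g = y
      unfold hitT
      rw [Nat.find_eq_iff]
      constructor
      · refine Or.inl ⟨by omega, ?_⟩
        rw [hg]
        beta_reduce
        beta_reduce
        rw [if_pos le_rfl, hay]
      · intro k hk
        rintro (⟨hk1, hk2⟩ | rfl)
        · rw [hg] at hk2
          beta_reduce at hk2
          beta_reduce
          rw [if_pos (by omega : k ≤ y)] at hk2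
          have := haint k hk1 hk
          omega
        · omega
    have hsub : n - y = x := by omega
    have hcomp1 : (fun i => if i ≤ n - T g then g (T g + i) - (h+1) else -1) = e := by
      funext i
      rw [hTg, hsub]
      rcases le_or_gt i x with h1 | h1
      · beta_reduce
        rw [if_pos h1]
        rcases Nat.eq_zero_or_pos i with rfl | hi
        · have : y + 0 = y := by omega
          rw [hg]
          beta_reduce
          rw [this, if_pos le_rfl, hay, he0]
          ring
        · rw [hg]
          beta_reduce
          beta_reduce
          rw [if_neg (by omega : ¬ y + i ≤ y)]
          have h2 : y + i - y = i := by omega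
          rw [h2]
          ring
      · beta_reduce
        rw [if_neg (by omega), heend i (by omega)]
    have hcomp2 : (fun i => if i ≤ T g then g i else h+1) = a := by
      funext i
      rw [hTg]
      rcases le_or_gt i y with h1 | h1
      · beta_reduce
        rw [if_pos h1, hg]
        beta_reduce
        beta_reduce
        rw [if_pos h1]
      · beta_reduce
        rw [if_neg (by omega), haend i (by omega)]
    have hpair : (n - T g, T g) = (x, y) := by rw [hTg, hsub]
    show (⟨(n - T g, T g), (fun i => if i ≤ n - T g then g (T g + i) - (h+1) else -1,
            fun i => if i ≤ T g then g i else h+1)⟩ :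
          Σ _ : ℕ × ℕ, (ℕ → ℤ) × (ℕ → ℤ))
        = ⟨(x, y), (e, a)⟩
    rw [hcomp1, hcomp2, hpair]
  · -- weights
    intro f hf
    obtain ⟨-, hD, h0, hint, hend⟩ := mem_AF.mp hf
    have hfn : f n = h := hend n le_rfl
    have hn1 : f (n-1) = h + 1 := by
      have h1 : h < f (n-1) := hint (n-1) (by omega) (by omega)
      have h2 := hD (n-1) (by omega)
      have h3 : n - 1 + 1 = n := by omega
      rw [h3, hfn] at h2
      omega
    have hle : T f ≤ n - 1 := Nat.find_le (Or.inl ⟨by omega, hn1⟩)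
    show wt f n = wt (fun i => if i ≤ n - T f then f (T f + i) - (h+1) else -1) (n - T f) *
      wt (fun i => if i ≤ T f then f i else h+1) (T f)
    rw [wt_split f (show T f ≤ n by omega), mul_comm]
    congr 1
    · -- excursion weight
      refine Finset.prod_congr rfl (fun i hi => ?_)
      rw [Finset.mem_range] at hi
      beta_reduce
      rw [if_pos (by omega : i + 1 ≤ n - T f), if_pos (by omega : i ≤ n - T f)]
      congr 1
      ring
    · -- arch weight
      refine Finset.prod_congr rfl (fun i hi => ?_)
      rw [Finset.mem_range] at hi
      beta_reduce
      rw [if_pos (by omega : i + 1 ≤ T f), if_pos (by omega : i ≤ T f)]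


/-! ### assembly -/

lemma excCoeff_zero : excCoeff 0 = 0 := by
  rw [excCoeff_eq_gen, gen, if_pos rfl]

lemma archCoeff_zero (h : ℕ) : archCoeff h 0 = 0 := by
  rw [archCoeff_eq_gen, gen, if_pos rfl]

lemma ofPS_coeff_neg (φ : PowerSeries Rp) {g : ℤ} (hg : g < 0) :
    (HahnSeries.ofPowerSeries ℤ Rp φ).coeff g = 0 := by
  rw [HahnSeries.ofPowerSeries_apply]
  apply HahnSeries.embDomain_of_notMem_range
  rintro ⟨n, hn⟩
  have hn' : ((n : ℤ)) = g := hn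
  omega

lemma key_coeff (n : ℕ) (hn : 2 ≤ n) :
    HahnSeries.single (-1 : ℤ) (excCoeff n)
        + HahnSeries.ofPowerSeries ℤ Rp (PowerSeries.mk fun h => archCoeff h n)
      = ∑ p ∈ Finset.HasAntidiagonal.antidiagonal n, HahnSeries.single (-1 : ℤ) (excCoeff p.1) *
          HahnSeries.ofPowerSeries ℤ Rp (PowerSeries.mk fun h => archCoeff h p.2) := by
  refine HahnSeries.coeff_inj.mp (funext fun g => ?_)
  have hsum : (∑ p ∈ Finset.HasAntidiagonal.antidiagonal n, HahnSeries.single (-1 : ℤ) (excCoeff p.1) *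
      HahnSeries.ofPowerSeries ℤ Rp (PowerSeries.mk fun h => archCoeff h p.2)).coeff g
      = ∑ p ∈ Finset.HasAntidiagonal.antidiagonal n, (HahnSeries.single (-1 : ℤ) (excCoeff p.1) *
        HahnSeries.ofPowerSeries ℤ Rp (PowerSeries.mk fun h => archCoeff h p.2)).coeff g :=
    map_sum (HahnSeries.coeff.addMonoidHom g) _ _
  have hterm : ∀ p : ℕ × ℕ, (HahnSeries.single (-1 : ℤ) (excCoeff p.1) *
      HahnSeries.ofPowerSeries ℤ Rp (PowerSeries.mk fun h => archCoeff h p.2)).coeff g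
      = excCoeff p.1 * (HahnSeries.ofPowerSeries ℤ Rp
          (PowerSeries.mk fun h => archCoeff h p.2)).coeff (g + 1) := by
    intro p
    have hgdec : g = (g + 1) + (-1) := by ring
    conv_lhs => rw [hgdec]
    rw [HahnSeries.coeff_single_mul_add]
  rw [HahnSeries.coeff_add, hsum, Finset.sum_congr rfl (fun p _ => hterm p)]
  rcases lt_trichotomy g (-1) with hg | hg | hg
  · rw [HahnSeries.coeff_single_of_ne (by omega), ofPS_coeff_neg _ (by omega)]
    have h2 : (∑ p ∈ Finset.HasAntidiagonal.antidiagonal n, excCoeff p.1 * (HahnSeries.ofPowerSeries ℤ Rp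
        (PowerSeries.mk fun h => archCoeff h p.2)).coeff (g + 1)) = 0 :=
      Finset.sum_eq_zero fun p _ => by
        rw [ofPS_coeff_neg _ (by omega : g + 1 < 0), mul_zero]
    rw [h2, add_zero]
  · subst hg
    rw [HahnSeries.coeff_single_same, ofPS_coeff_neg _ (by omega)]
    have h1 : ∀ p : ℕ × ℕ, (HahnSeries.ofPowerSeries ℤ Rp
        (PowerSeries.mk fun h => archCoeff h p.2)).coeff ((-1 : ℤ) + 1) = archCoeff 0 p.2 := by
      intro p
      have h2 : ((-1 : ℤ) + 1) = ((0 : ℕ) : ℤ) := by norm_num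
      conv_lhs => rw [h2]
      rw [HahnSeries.ofPowerSeries_apply_coeff, PowerSeries.coeff_mk]
    have h2 : (∑ p ∈ Finset.HasAntidiagonal.antidiagonal n, excCoeff p.1 * (HahnSeries.ofPowerSeries ℤ Rp
        (PowerSeries.mk fun h => archCoeff h p.2)).coeff ((-1 : ℤ) + 1))
        = ∑ p ∈ Finset.HasAntidiagonal.antidiagonal n, gen (-1) p.1 * gen ((-1) + 1) p.2 :=
      Finset.sum_congr rfl fun p _ => by
        rw [h1 p, excCoeff_eq_gen, archCoeff_eq_gen]
        norm_num
    rw [h2, add_zero, excCoeff_eq_gen, gen_rec (-1) n hn]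
  · rw [HahnSeries.coeff_single_of_ne (by omega)]
    have hg0 : g = ((g.toNat : ℕ) : ℤ) := by omega
    have hLHS : (HahnSeries.ofPowerSeries ℤ Rp
        (PowerSeries.mk fun h => archCoeff h n)).coeff g = archCoeff g.toNat n := by
      conv_lhs => rw [hg0]
      rw [HahnSeries.ofPowerSeries_apply_coeff, PowerSeries.coeff_mk]
    have h1 : ∀ p : ℕ × ℕ, (HahnSeries.ofPowerSeries ℤ Rp
        (PowerSeries.mk fun h => archCoeff h p.2)).coeff (g + 1) = archCoeff (g.toNat + 1) p.2 := by
      intro p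
      have h2 : g + 1 = ((g.toNat + 1 : ℕ) : ℤ) := by omega
      conv_lhs => rw [h2]
      rw [HahnSeries.ofPowerSeries_apply_coeff, PowerSeries.coeff_mk]
    have h2 : (∑ p ∈ Finset.HasAntidiagonal.antidiagonal n, excCoeff p.1 * (HahnSeries.ofPowerSeries ℤ Rp
        (PowerSeries.mk fun h => archCoeff h p.2)).coeff (g + 1))
        = ∑ p ∈ Finset.HasAntidiagonal.antidiagonal n, gen (-1) p.1 * gen (g + 1) p.2 :=
      Finset.sum_congr rfl fun p _ => by
        rw [h1 p, excCoeff_eq_gen, archCoeff_eq_gen]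
        congr 2
        omega
    rw [hLHS, h2, zero_add, archCoeff_eq_gen]
    have h3 : gen ((g.toNat : ℕ) : ℤ) n = gen g n := by rw [← hg0]
    rw [h3, gen_rec g n hn]

/-- Formal Wiener–Hopf factorization, in the ring `ℚ[p_{-1},p₀,...]((u))[[s]]`:
`1 − sP(u) = (1 − U(s)/u)·(1 − Σ_{h≥0} A_h^>(s) u^h)`, where `U(s)` is the excursion
generating function and `A_h^>(s)` the generating function of strict arches of tilt `h`. -/
theorem wiener_hopf_factorization :
    (1 : PowerSeries (LaurentSeries Rp))
        - PowerSeries.X * PowerSeries.C (R := LaurentSeries Rp) Pser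
      = (1 - PowerSeries.mk fun ℓ => HahnSeries.single (-1 : ℤ) (excCoeff ℓ))
        * (1 - PowerSeries.mk fun ℓ =>
            HahnSeries.ofPowerSeries ℤ Rp (PowerSeries.mk fun h => archCoeff h ℓ)) := by
  set U : PowerSeries (LaurentSeries Rp) :=
    PowerSeries.mk fun ℓ => HahnSeries.single (-1 : ℤ) (excCoeff ℓ) with hU
  set A : PowerSeries (LaurentSeries Rp) :=
    PowerSeries.mk fun ℓ =>
      HahnSeries.ofPowerSeries ℤ Rp (PowerSeries.mk fun h => archCoeff h ℓ) with hA
  have hU0 : (PowerSeries.coeff 0) U = 0 := by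
    rw [hU, PowerSeries.coeff_mk, excCoeff_zero, HahnSeries.single_eq_zero]
  have hA0 : (PowerSeries.coeff 0) A = 0 := by
    rw [hA, PowerSeries.coeff_mk]
    have : (PowerSeries.mk fun h => archCoeff h 0) = 0 := by
      refine PowerSeries.ext fun k => ?_
      rw [PowerSeries.coeff_mk, archCoeff_zero, map_zero]
    rw [this, map_zero]
  have key : U + A - U * A = PowerSeries.X * PowerSeries.C (R := LaurentSeries Rp) Pser := by
    refine PowerSeries.ext fun n => ?_
    simp only [map_sub, map_add]
    rw [PowerSeries.coeff_mul]
    match n with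
    | 0 =>
      rw [PowerSeries.coeff_zero_X_mul]
      rw [hU0, hA0]
      simp [hU0, hA0]
    | 1 =>
      rw [PowerSeries.coeff_succ_X_mul, PowerSeries.coeff_C]
      rw [if_pos rfl]
      have hanti : Finset.HasAntidiagonal.antidiagonal 1 = {((0:ℕ), (1:ℕ)), (1, 0)} := rfl
      rw [hanti, Finset.sum_insert (by decide), Finset.sum_singleton]
      have hA0' : (PowerSeries.coeff 0) A = 0 := hA0
      rw [hU0, hA0, zero_mul, mul_zero, add_zero, sub_zero]
      rw [hU, hA, PowerSeries.coeff_mk, PowerSeries.coeff_mk]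
      have he : excCoeff 1 = pw (-1) := by rw [excCoeff_eq_gen, gen_one]
      have ha : (PowerSeries.mk fun h => archCoeff h 1) = PowerSeries.mk fun n => pw (n : ℤ) := by
        refine PowerSeries.ext fun k => ?_
        rw [PowerSeries.coeff_mk, PowerSeries.coeff_mk, archCoeff_eq_gen, gen_one]
      rw [he, ha, Pser]
    | (m + 2) =>
      rw [PowerSeries.coeff_succ_X_mul, PowerSeries.coeff_C, if_neg (by omega)]
      rw [hU, hA]
      simp only [PowerSeries.coeff_mk]
      rw [← key_coeff (m + 2) (by omega)]
      abel
  rw [← key]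
  ring

end
end

section
/- Let x(z) = Σ_{k≥−1} a_k z^{−k} and y(z) = z^{−1} + Σ_{k≥0} b_k z^k be formal Laurent series with coefficients in R = ℚ[[t, t₁°, t₂°, ..., t₁•, t₂•, ...]]. Then the system of equations [z^{−k}](x(z) − tz − Σ_{d≥1} t_d• y(z)^{d−1}) = 0 for all k ≥ −1, together with [z^k](y(z) − Σ_{d≥1} t_d° x(z)^{d−1}) = 0 for all k ≥ 0, determines the coefficients a_k (k ≥ −1) and b_k (k ≥ 0) uniquely as elements of R. -/
noncomputable section

/-- Variable names: `Sum.inl ()` is the vertex weight `t`; `Sum.inr (Sum.inl d)` is the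
white face weight `t_d°`; `Sum.inr (Sum.inr d)` is the black face weight `t_d•`. -/
abbrev SVar : Type := Unit ⊕ ℕ ⊕ ℕ

/-- The base ring `R = ℚ[[t, t₁°, t₂°, ..., t₁•, t₂•, ...]]`. -/
abbrev R13 : Type := MvPowerSeries SVar ℚ

def tvar : R13 := MvPowerSeries.X (Sum.inl ())
def toW (d : ℕ) : SVar := Sum.inr (Sum.inl d)   -- index of t_d°
def tbW (d : ℕ) : SVar := Sum.inr (Sum.inr d)   -- index of t_d•

/-- `[z^k] x(z)^m` where `x(z) = Σ_{j≥−1} a_j z^{−j}`: the sum over all ways to choose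
exponents `e i ≤ 1` of `z` in each factor with total `k`, of the product of the
corresponding coefficients `a_{−e i}`. -/
def xcoef (a : ℤ → R13) (m : ℕ) (k : ℤ) : R13 :=
  ∑ᶠ (e : Fin m → ℤ) (_ : (∀ i, e i ≤ 1) ∧ ∑ i, e i = k), ∏ i, a (-(e i))

/-- `[z^k] y(z)^m` where `y(z) = Σ_{j≥−1} b_j z^{j}` (with `b_{−1} = 1`). -/
def ycoef (b : ℤ → R13) (m : ℕ) (k : ℤ) : R13 :=
  ∑ᶠ (e : Fin m → ℤ) (_ : (∀ i, -1 ≤ e i) ∧ ∑ i, e i = k), ∏ i, b (e i)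

/-- The infinite sum `Σ_{d∈ℕ} X_{v d} · (c d)`, defined coefficientwise: the coefficient
of a monomial `μ` receives a contribution from the term of index `d` exactly when `μ`
contains the variable `X_{v d}`. This makes sense of `Σ_{d≥1} t_d° (⋯)` and
`Σ_{d≥1} t_d• (⋯)` in `R`. -/
def varSum (v : ℕ → SVar) (c : ℕ → R13) : R13 :=
  fun μ => ∑ᶠ (d : ℕ) (_ : 1 ≤ μ (v d)),
    MvPowerSeries.coeff (μ - Finsupp.single (v d) 1) (c d)

namespace SysAux

open MvPowerSeries

def D (μ : SVar →₀ ℕ) : ℕ := μ.sum fun _ n => n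

lemma D_add (x y : SVar →₀ ℕ) : D (x + y) = D x + D y :=
  Finsupp.sum_add_index' (fun _ => rfl) (fun _ _ _ => rfl)

lemma D_mono {x y : SVar →₀ ℕ} (h : x ≤ y) : D x ≤ D y := by
  obtain ⟨c, rfl⟩ := le_iff_exists_add.mp h
  simp [D_add]

lemma D_sub_single_lt {μ : SVar →₀ ℕ} {s : SVar} (h : 1 ≤ μ s) :
    D (μ - Finsupp.single s 1) < D μ := by
  have hle : Finsupp.single s 1 ≤ μ := by rwa [Finsupp.single_le_iff]
  have heq : (μ - Finsupp.single s 1) + Finsupp.single s 1 = μ := tsub_add_cancel_of_le hle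
  have h2 := D_add (μ - Finsupp.single s 1) (Finsupp.single s 1)
  rw [heq] at h2
  have hs : D (Finsupp.single s 1) = 1 := by
    simp [D, Finsupp.sum_single_index]
  omega

lemma coeff_prod_congr {ι : Type} (s : Finset ι) (f g : ι → R13) (ν : SVar →₀ ℕ)
    (h : ∀ i ∈ s, ∀ κ ≤ ν, MvPowerSeries.coeff κ (f i) = MvPowerSeries.coeff κ (g i)) :
    ∀ κ ≤ ν, MvPowerSeries.coeff κ (∏ i ∈ s, f i) = MvPowerSeries.coeff κ (∏ i ∈ s, g i) := by
  classical
  induction s using Finset.induction with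
  | empty => intro κ _; rfl
  | @insert a s ha ih =>
      intro κ hκ
      rw [Finset.prod_insert ha, Finset.prod_insert ha, MvPowerSeries.coeff_mul,
        MvPowerSeries.coeff_mul]
      apply Finset.sum_congr rfl
      intro p hp
      rw [Finset.HasAntidiagonal.mem_antidiagonal] at hp
      have h1 : p.1 ≤ ν := le_trans (le_iff_exists_add.mpr ⟨p.2, hp.symm⟩) hκ
      have h2 : p.2 ≤ ν := le_trans (le_iff_exists_add.mpr ⟨p.1, by rw [add_comm, hp]⟩) hκ
      rw [h a (Finset.mem_insert_self a s) p.1 h1,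
        ih (fun i hi => h i (Finset.mem_insert_of_mem hi)) p.2 h2]

lemma xset_finite (m : ℕ) (k : ℤ) :
    {e : Fin m → ℤ | (∀ i, e i ≤ 1) ∧ ∑ i, e i = k}.Finite := by
  apply Set.Finite.subset (Set.Finite.pi (fun _ : Fin m => Set.finite_Icc (k - m) 1))
  rintro e ⟨h1, h2⟩ i _
  refine ⟨?_, h1 i⟩
  have hsum : e i + ∑ j ∈ Finset.univ.erase i, e j = k := by
    rw [Finset.add_sum_erase _ _ (Finset.mem_univ i)]; exact h2
  have hb : ∑ j ∈ Finset.univ.erase i, e j ≤ ∑ j ∈ Finset.univ.erase i, (1 : ℤ) :=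
    Finset.sum_le_sum (fun j _ => h1 j)
  have hc : ∑ j ∈ Finset.univ.erase i, (1 : ℤ) = ((Finset.univ.erase i).card : ℤ) := by
    simp
  have hcard : (Finset.univ.erase i).card ≤ m := by
    refine le_trans Finset.card_erase_le ?_
    simp
  have : ((Finset.univ.erase i).card : ℤ) ≤ (m : ℤ) := by exact_mod_cast hcard
  omega

lemma yset_finite (m : ℕ) (k : ℤ) :
    {e : Fin m → ℤ | (∀ i, -1 ≤ e i) ∧ ∑ i, e i = k}.Finite := by
  apply Set.Finite.subset (Set.Finite.pi (fun _ : Fin m => Set.finite_Icc (-1) (k + m)))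
  rintro e ⟨h1, h2⟩ i _
  refine ⟨h1 i, ?_⟩
  have hsum : e i + ∑ j ∈ Finset.univ.erase i, e j = k := by
    rw [Finset.add_sum_erase _ _ (Finset.mem_univ i)]; exact h2
  have hb : ∑ j ∈ Finset.univ.erase i, (-1 : ℤ) ≤ ∑ j ∈ Finset.univ.erase i, e j :=
    Finset.sum_le_sum (fun j _ => h1 j)
  have hc : ∑ j ∈ Finset.univ.erase i, (-1 : ℤ) = -((Finset.univ.erase i).card : ℤ) := by
    simp
  have hcard : (Finset.univ.erase i).card ≤ m := by
    refine le_trans Finset.card_erase_le ?_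
    simp
  have : ((Finset.univ.erase i).card : ℤ) ≤ (m : ℤ) := by exact_mod_cast hcard
  omega

lemma xcoef_eq (a : ℤ → R13) (m : ℕ) (k : ℤ) :
    xcoef a m k = ∑ e ∈ (xset_finite m k).toFinset, ∏ i, a (-(e i)) :=
  finsum_mem_eq_finite_toFinset_sum _ (xset_finite m k)

lemma ycoef_eq (b : ℤ → R13) (m : ℕ) (k : ℤ) :
    ycoef b m k = ∑ e ∈ (yset_finite m k).toFinset, ∏ i, b (e i) :=
  finsum_mem_eq_finite_toFinset_sum _ (yset_finite m k)

end SysAux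


/-- The system of equations `[z^{−k}](x(z) − tz − Σ_{d≥1} t_d• y(z)^{d−1}) = 0` for
`k ≥ −1`, and `[z^k](y(z) − Σ_{d≥1} t_d° x(z)^{d−1}) = 0` for `k ≥ 0`, for
`x(z) = Σ_{k≥−1} a_k z^{−k}` and `y(z) = z^{−1} + Σ_{k≥0} b_k z^k`. -/
def SatisfiesSystem (a b : ℤ → R13) : Prop :=
  (∀ k : ℤ, k < -1 → a k = 0) ∧
  (b (-1) = 1) ∧ (∀ k : ℤ, k < -1 → b k = 0) ∧
  (∀ k : ℤ, -1 ≤ k →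
    a k = (if k = -1 then tvar else 0)
      + varSum tbW (fun d => if 1 ≤ d then ycoef b (d - 1) (-k) else 0)) ∧
  (∀ k : ℤ, 0 ≤ k →
    b k = varSum toW (fun d => if 1 ≤ d then xcoef a (d - 1) k else 0))

namespace SysAux

open MvPowerSeries

lemma coeff_xcoef_congr {a a' : ℤ → R13} {ν : SVar →₀ ℕ}
    (h : ∀ j : ℤ, ∀ κ ≤ ν, coeff κ (a j) = coeff κ (a' j)) (m : ℕ) (k : ℤ) :
    coeff ν (xcoef a m k) = coeff ν (xcoef a' m k) := by
  rw [xcoef_eq, xcoef_eq, map_sum, map_sum]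
  refine Finset.sum_congr rfl (fun e _ => ?_)
  exact coeff_prod_congr Finset.univ _ _ ν (fun i _ κ hκ => h _ κ hκ) ν le_rfl

lemma coeff_ycoef_congr {b b' : ℤ → R13} {ν : SVar →₀ ℕ}
    (h : ∀ j : ℤ, ∀ κ ≤ ν, coeff κ (b j) = coeff κ (b' j)) (m : ℕ) (k : ℤ) :
    coeff ν (ycoef b m k) = coeff ν (ycoef b' m k) := by
  rw [ycoef_eq, ycoef_eq, map_sum, map_sum]
  refine Finset.sum_congr rfl (fun e _ => ?_)
  exact coeff_prod_congr Finset.univ _ _ ν (fun i _ κ hκ => h _ κ hκ) ν le_rfl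

lemma coeff_varSum (v : ℕ → SVar) (c : ℕ → R13) (μ : SVar →₀ ℕ) :
    coeff μ (varSum v c) = ∑ᶠ (d : ℕ) (_ : 1 ≤ μ (v d)),
      coeff (μ - Finsupp.single (v d) 1) (c d) := rfl

lemma coeff_varSum_congr {v : ℕ → SVar} {c c' : ℕ → R13} {μ : SVar →₀ ℕ}
    (h : ∀ d, 1 ≤ μ (v d) →
      coeff (μ - Finsupp.single (v d) 1) (c d)
        = coeff (μ - Finsupp.single (v d) 1) (c' d)) :
    coeff μ (varSum v c) = coeff μ (varSum v c') := by
  classical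
  rw [coeff_varSum, coeff_varSum]
  refine finsum_congr (fun d => ?_)
  rw [finsum_eq_if, finsum_eq_if]
  by_cases hd : 1 ≤ μ (v d)
  · rw [if_pos hd, if_pos hd, h d hd]
  · rw [if_neg hd, if_neg hd]

def P2 : Type := (ℤ → R13) × (ℤ → R13)

def G (p : P2) : P2 :=
  (fun k => if -1 ≤ k then (if k = -1 then tvar else 0)
      + varSum tbW (fun d => if 1 ≤ d then ycoef p.2 (d - 1) (-k) else 0) else 0,
   fun k => if 0 ≤ k then varSum toW (fun d => if 1 ≤ d then xcoef p.1 (d - 1) k else 0)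
      else if k = -1 then 1 else 0)

lemma satisfies_iff (ab : P2) : SatisfiesSystem ab.1 ab.2 ↔ G ab = ab := by
  obtain ⟨a, b⟩ := ab
  constructor
  · rintro ⟨h1, h2, h3, h4, h5⟩
    have ha : (G (a, b)).1 = a := by
      funext k
      show (if -1 ≤ k then _ else 0) = a k
      by_cases hk : -1 ≤ k
      · rw [if_pos hk]; exact (h4 k hk).symm
      · rw [if_neg hk]; exact (h1 k (by omega)).symm
    have hb : (G (a, b)).2 = b := by
      funext k
      show (if 0 ≤ k then _ else _) = b k
      by_cases hk : 0 ≤ k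
      · rw [if_pos hk]; exact (h5 k hk).symm
      · rw [if_neg hk]
        by_cases hk1 : k = -1
        · rw [if_pos hk1, hk1]; exact h2.symm
        · rw [if_neg hk1]; exact (h3 k (by omega)).symm
    exact Prod.ext ha hb
  · intro h
    show SatisfiesSystem a b
    have ha : ∀ k, (G (a, b)).1 k = a k := fun k => congrFun (congrArg Prod.fst h) k
    have hb : ∀ k, (G (a, b)).2 k = b k := fun k => congrFun (congrArg Prod.snd h) k
    refine ⟨fun k hk => ?_, ?_, fun k hk => ?_, fun k hk => ?_, fun k hk => ?_⟩
    · rw [← ha k]; simp only [G]; rw [if_neg (by omega : ¬ (-1:ℤ) ≤ k)]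
    · rw [← hb (-1)]; simp only [G]; norm_num
    · rw [← hb k]; simp only [G]
      rw [if_neg (by omega : ¬ (0:ℤ) ≤ k), if_neg (by omega : ¬ k = -1)]
    · rw [← ha k]; simp only [G]; rw [if_pos hk]
    · rw [← hb k]; simp only [G]; rw [if_pos hk]

def Agree (p q : P2) (n : ℕ) : Prop :=
  ∀ ν : SVar →₀ ℕ, D ν < n → ∀ k : ℤ,
    (coeff ν (p.1 k) = coeff ν (q.1 k)) ∧ (coeff ν (p.2 k) = coeff ν (q.2 k))

lemma contract {p q : P2} {μ : SVar →₀ ℕ} (h : Agree p q (D μ)) : ∀ k : ℤ,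
    (coeff μ ((G p).1 k) = coeff μ ((G q).1 k)) ∧
    (coeff μ ((G p).2 k) = coeff μ ((G q).2 k)) := by
  intro k
  constructor
  · show coeff μ (if -1 ≤ k then _ else 0) = coeff μ (if -1 ≤ k then _ else 0)
    by_cases hk : -1 ≤ k
    · rw [if_pos hk, if_pos hk, map_add, map_add]
      congr 1
      refine coeff_varSum_congr (fun d hd => ?_)
      by_cases h1d : 1 ≤ d
      · rw [if_pos h1d, if_pos h1d]
        refine coeff_ycoef_congr (fun j κ hκ => ?_) _ _
        have hlt : D κ < D μ := lt_of_le_of_lt (D_mono hκ) (D_sub_single_lt hd)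
        exact (h κ hlt j).2
      · rw [if_neg h1d, if_neg h1d]
    · rw [if_neg hk, if_neg hk]
  · show coeff μ (if 0 ≤ k then _ else _) = coeff μ (if 0 ≤ k then _ else _)
    by_cases hk : 0 ≤ k
    · rw [if_pos hk, if_pos hk]
      refine coeff_varSum_congr (fun d hd => ?_)
      by_cases h1d : 1 ≤ d
      · rw [if_pos h1d, if_pos h1d]
        refine coeff_xcoef_congr (fun j κ hκ => ?_) _ _
        have hlt : D κ < D μ := lt_of_le_of_lt (D_mono hκ) (D_sub_single_lt hd)
        exact (h κ hlt j).1
      · rw [if_neg h1d, if_neg h1d]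
    · rw [if_neg hk, if_neg hk]

lemma agree_iter : ∀ n : ℕ, ∀ p q : P2, Agree (G^[n] p) (G^[n] q) n := by
  intro n
  induction n with
  | zero => intro p q ν hν; exact absurd hν (Nat.not_lt_zero _)
  | succ n ih =>
      intro p q ν hν k
      rw [Function.iterate_succ_apply', Function.iterate_succ_apply']
      exact contract (fun κ hκ => ih p q κ (by omega)) k

lemma stable (p q : P2) (ν : SVar →₀ ℕ) {n m : ℕ} (hn : D ν < n) (hm : D ν < m) :
    ∀ k : ℤ, (coeff ν ((G^[n] p).1 k) = coeff ν ((G^[m] q).1 k)) ∧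
      (coeff ν ((G^[n] p).2 k) = coeff ν ((G^[m] q).2 k)) := by
  obtain ⟨n', rfl⟩ : ∃ n', n = (D ν + 1) + n' := ⟨n - (D ν + 1), by omega⟩
  obtain ⟨m', rfl⟩ : ∃ m', m = (D ν + 1) + m' := ⟨m - (D ν + 1), by omega⟩
  rw [Function.iterate_add_apply G (D ν + 1) n' p,
    Function.iterate_add_apply G (D ν + 1) m' q]
  exact agree_iter (D ν + 1) _ _ ν (by omega)

def start : P2 := (fun _ => 0, fun _ => 0)

def L : P2 :=
  (fun k => fun μ => coeff μ ((G^[D μ + 1] start).1 k),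
   fun k => fun μ => coeff μ ((G^[D μ + 1] start).2 k))

lemma coeff_L1 (k : ℤ) (μ : SVar →₀ ℕ) :
    coeff μ (L.1 k) = coeff μ ((G^[D μ + 1] start).1 k) := rfl

lemma coeff_L2 (k : ℤ) (μ : SVar →₀ ℕ) :
    coeff μ (L.2 k) = coeff μ ((G^[D μ + 1] start).2 k) := rfl

lemma L_agree (n : ℕ) : Agree L (G^[n] start) n := by
  intro ν hν k
  have h := stable start start ν (Nat.lt_succ_self (D ν)) hν k
  exact ⟨(coeff_L1 k ν).trans h.1, (coeff_L2 k ν).trans h.2⟩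

lemma G_fixed_L : G L = L := by
  have key : ∀ k (μ : SVar →₀ ℕ),
      (coeff μ ((G L).1 k) = coeff μ (L.1 k)) ∧
      (coeff μ ((G L).2 k) = coeff μ (L.2 k)) := by
    intro k μ
    have h1 := contract (p := L) (q := G^[D μ] start) (μ := μ)
      (fun κ hκ => L_agree (D μ) κ hκ) k
    rw [← Function.iterate_succ_apply' G (D μ) start] at h1
    exact ⟨h1.1.trans (coeff_L1 k μ).symm, h1.2.trans (coeff_L2 k μ).symm⟩
  refine Prod.ext ?_ ?_ <;> funext k <;> ext μ
  · exact (key k μ).1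
  · exact (key k μ).2

lemma fix_unique {p q : P2} (hp : G p = p) (hq : G q = q) : p = q := by
  have key : ∀ n : ℕ, ∀ ν : SVar →₀ ℕ, D ν ≤ n → ∀ k : ℤ,
      (coeff ν (p.1 k) = coeff ν (q.1 k)) ∧
      (coeff ν (p.2 k) = coeff ν (q.2 k)) := by
    intro n
    induction n with
    | zero =>
        intro ν hν k
        have h := contract (p := p) (q := q) (μ := ν)
          (fun κ hκ => absurd hκ (by omega)) k
        rwa [hp, hq] at h
    | succ n ih =>
        intro ν hν k
        have h := contract (p := p) (q := q) (μ := ν)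
          (fun κ hκ k' => ih κ (by omega) k') k
        rwa [hp, hq] at h
  refine Prod.ext ?_ ?_ <;> funext k <;> ext μ
  · exact (key (D μ) μ le_rfl k).1
  · exact (key (D μ) μ le_rfl k).2

end SysAux


/-- The system of equations determines the coefficients `a_k` (`k ≥ −1`) and `b_k`
(`k ≥ 0`) uniquely as elements of `R = ℚ[[t, t₁°, t₂°, ..., t₁•, t₂•, ...]]`. -/
theorem system_has_unique_solution :
    ∃! ab : (ℤ → R13) × (ℤ → R13), SatisfiesSystem ab.1 ab.2 := by
  refine ⟨SysAux.L, (SysAux.satisfies_iff SysAux.L).mpr SysAux.G_fixed_L, ?_⟩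
  intro y hy
  exact SysAux.fix_unique ((SysAux.satisfies_iff y).mp hy) SysAux.G_fixed_L

end
end
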